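/- Assume that (H, G₁) satisfies Condition A with constant ζ and Condition B with constant ζ for some integer ζ ≥ 1. Then P⁻¹P⁻¹ ⊆ P⁻¹: the product of two (H, G₁)-negative elements of G is (H, G₁)-negative. -/

import Mathlib

namespace GarsideOrder

variable {G : Type*} [Group G]

/-- `a ≤_R b` iff `b * a⁻¹ ∈ M`. -/
def leR (M : Submonoid G) (a b : G) : Prop := b * a⁻¹ ∈ M

/-- `a ≤_L b` iff `a⁻¹ * b ∈ M`. -/
def leL (M : Submonoid G) (a b : G) : Prop := a⁻¹ * b ∈ M

/-- Right divisors (in `M`) of `a`. -/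
def DivR (M : Submonoid G) (a : G) : Set G := {b : G | b ∈ M ∧ leR M b a}

/-- Left divisors (in `M`) of `a`. -/
def DivL (M : Submonoid G) (a : G) : Set G := {b : G | b ∈ M ∧ leL M b a}

/-- `a` is balanced if its sets of right and left divisors coincide. -/
def Balanced (M : Submonoid G) (a : G) : Prop := DivR M a = DivL M a

open Classical in
/-- The `N`-tail of `a`: the unique `b ∈ N` having the same right divisors lying in `N`
as `a` (w.r.t. the divisibility of the ambient monoid `M`). -/
noncomputable def tail (M N : Submonoid G) (a : G) : G :=
  if h : ∃ b : G, b ∈ N ∧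
      {c : G | c ∈ N ∧ leR M c a} = {c : G | c ∈ N ∧ leR M c b} then
    h.choose
  else 1

/-- Iterated stripping of alternating tails: first the `M₁`-tail, then the `N`-tail, etc. -/
noncomputable def strip (M M₁ N : Submonoid G) : ℕ → G → G
  | 0, a => a
  | i + 1, a =>
      strip M M₁ N i a *
        (tail M (if i % 2 = 0 then M₁ else N) (strip M M₁ N i a))⁻¹

/-- The breadth of `a`: the length of the alternating form of `a`, i.e. the least `p ≥ 1`
such that stripping alternating tails `p` times reaches `1`. -/
noncomputable def bh (M M₁ N : Submonoid G) (a : G) : ℕ :=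
  sInf {p : ℕ | 1 ≤ p ∧ strip M M₁ N p a = 1}

/-- The depth of `a`: `(bh a - 1)/2` if `bh a` is odd, `bh a / 2` if `bh a` is even;
in both cases this is `bh a / 2` with natural division. -/
noncomputable def dpt (M M₁ N : Submonoid G) (a : G) : ℕ := bh M M₁ N a / 2

/-- `a ∈ M` is unmovable if `Δ` does not right-divide it. -/
def Unmovable (M : Submonoid G) (Δ a : G) : Prop := a ∈ M ∧ ¬ leR M Δ a

/-- `α` is `(H, G₁)`-negative: its `Δ`-form is `a Δ^{-k}` with `k ≥ 1` and
`dpt a < dpt (Δ^k)`. -/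
def Negative (M M₁ N : Submonoid G) (Δ : G) (α : G) : Prop :=
  ∃ a : G, ∃ k : ℕ, Unmovable M Δ a ∧ 1 ≤ k ∧ α = a * (Δ ^ k)⁻¹ ∧
    dpt M M₁ N a < dpt M M₁ N (Δ ^ k)

/-- `α` is `(H, G₁)`-positive if `α⁻¹` is `(H, G₁)`-negative. -/
def Positive (M M₁ N : Submonoid G) (Δ : G) (α : G) : Prop :=
  Negative M M₁ N Δ α⁻¹

/-- The set `Θ` of theta elements `θ^k a₀`, `k ≥ 1`, `a₀ ∈ M₁`. -/
def thetaSet (M₁ : Submonoid G) (θ : G) : Set G :=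
  {x : G | ∃ k : ℕ, 1 ≤ k ∧ ∃ a₀ ∈ M₁, x = θ ^ k * a₀}

/-- `Θ̄ = Θ ∪ M₁`. -/
def thetaBar (M₁ : Submonoid G) (θ : G) : Set G := thetaSet M₁ θ ∪ (M₁ : Set G)

/-- Condition A with constant `ζ`: `dpt (Δ^k) = ζ k + 1` for all `k ≥ 1`. -/
def CondA (M M₁ N : Submonoid G) (Δ : G) (ζ : ℕ) : Prop :=
  ∀ k : ℕ, 1 ≤ k → dpt M M₁ N (Δ ^ k) = ζ * k + 1

/-- Condition B with constant `ζ`. -/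
def CondB (M M₁ N : Submonoid G) (Δ θ : G) (ζ : ℕ) : Prop :=
  ∀ a b c : G, ∀ t : ℤ,
    Unmovable M Δ a → Unmovable M Δ b →
    ¬(a ∈ thetaBar M₁ θ ∧ b ∈ thetaBar M₁ θ) →
    Unmovable M Δ c → a * b = c * Δ ^ t →
    ∃ ε : ℕ, ε ≤ 1 ∧
      (dpt M M₁ N c : ℤ) =
        (dpt M M₁ N a : ℤ) + (dpt M M₁ N b : ℤ) - (ζ : ℤ) * t - (ε : ℤ) ∧
      ((a ∈ thetaSet M₁ θ ∨ b ∈ thetaSet M₁ θ ∨ c ∈ M₁) → ε = 1)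

/-- A Garside structure with group of fractions the subgroup `car`. -/
structure IsGarsideOn (car : Subgroup G) (M : Submonoid G) (Δ : G) : Prop where
  M_sub : (M : Set G) ⊆ (car : Set G)
  delta_mem : Δ ∈ M
  units_trivial : ∀ x : G, x ∈ M → x⁻¹ ∈ M → x = 1
  noetherian : ∀ a ∈ M, ∃ n : ℕ, 1 ≤ n ∧ ∀ l : List G,
      (∀ x ∈ l, x ∈ M ∧ x ≠ 1) → l.prod = a → l.length ≤ n
  balanced : Balanced M Δ
  div_finite : (DivR M Δ).Finite
  div_gen_monoid : Submonoid.closure (DivR M Δ) = M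
  div_gen_group : Subgroup.closure (DivR M Δ) = car
  meet : ∀ a ∈ car, ∀ b ∈ car, ∃ c ∈ car, leR M c a ∧ leR M c b ∧
      ∀ d ∈ car, leR M d a → leR M d b → leR M d c
  join : ∀ a ∈ car, ∀ b ∈ car, ∃ c ∈ car, leR M a c ∧ leR M b c ∧
      ∀ d ∈ car, leR M a d → leR M b d → leR M c d

/-- The parabolic submonoid determined by `δ`: the submonoid generated by `Div(δ)`. -/
def parM (M : Submonoid G) (δ : G) : Submonoid G := Submonoid.closure (DivR M δ)

/-- The parabolic subgroup determined by `δ`: the subgroup generated by `Div(δ)`. -/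
def parG (M : Submonoid G) (δ : G) : Subgroup G := Subgroup.closure (DivR M δ)

/-- `δ` determines a parabolic substructure of `(G, M, Δ)`. -/
structure IsParabolic (M : Submonoid G) (Δ δ : G) : Prop where
  mem : δ ∈ M
  balanced : Balanced M δ
  div_eq : DivR M δ = DivR M Δ ∩ (parM M δ : Set G)

/-- The setting of Section 3: a Garside structure `(car, M, Δ)` together with two
parabolic substructures `(H, N, Λ)` (given by `lam`) and `(G₁, M₁, Δ₁)` (given by `δ1`),
with `N ≠ M`, `M₁ ≠ M`, `N ∪ M₁` generating `M`, `Δ` central, `Δ₁` central in `G₁`. -/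
structure Setting (G : Type*) [Group G] where
  car : Subgroup G
  M : Submonoid G
  Δ : G
  δ1 : G
  lam : G
  garside : IsGarsideOn car M Δ
  par1 : IsParabolic M Δ δ1
  parH : IsParabolic M Δ lam
  N_ne : parM M lam ≠ M
  M1_ne : parM M δ1 ≠ M
  unionGen : Submonoid.closure ((parM M lam : Set G) ∪ (parM M δ1 : Set G)) = M
  delta_central : ∀ g ∈ car, Δ * g = g * Δ
  delta1_central : ∀ g ∈ parG M δ1, δ1 * g = g * δ1

namespace Setting

variable (S : Setting G)

/-- The parabolic submonoid `M₁`. -/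
def M₁ : Submonoid G := parM S.M S.δ1

/-- The parabolic submonoid `N`. -/
def Nsub : Submonoid G := parM S.M S.lam

/-- The parabolic subgroup `G₁`. -/
def G₁ : Subgroup G := parG S.M S.δ1

/-- `θ = Δ Δ₁⁻¹`. -/
def theta : G := S.Δ * S.δ1⁻¹

/-- The set of `(H, G₁)`-negative elements. -/
def Neg : Set G := {α : G | Negative S.M S.M₁ S.Nsub S.Δ α}

/-- The set of `(H, G₁)`-positive elements. -/
def Pos : Set G := {α : G | α⁻¹ ∈ S.Neg}

/-- Condition A. -/
def condA (ζ : ℕ) : Prop := CondA S.M S.M₁ S.Nsub S.Δ ζ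

/-- Condition B. -/
def condB (ζ : ℕ) : Prop := CondB S.M S.M₁ S.Nsub S.Δ S.theta ζ

/-- `(H, G₁)` is a Dehornoy structure: `PP ⊆ P`, `G₁ P G₁ ⊆ P`, and the group is the
disjoint union of `P`, `P⁻¹` and `G₁`. -/
def IsDehornoy : Prop :=
  (∀ α ∈ S.Pos, ∀ β ∈ S.Pos, α * β ∈ S.Pos) ∧
  (∀ g₁ ∈ S.G₁, ∀ α ∈ S.Pos, ∀ g₂ ∈ S.G₁, g₁ * α * g₂ ∈ S.Pos) ∧
  (∀ α ∈ S.car, α ∈ S.Pos ∨ α ∈ S.Neg ∨ α ∈ S.G₁) ∧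
  (∀ α : G, ¬(α ∈ S.Pos ∧ α ∈ S.Neg)) ∧
  (∀ α : G, ¬(α ∈ S.Pos ∧ α ∈ S.G₁)) ∧
  (∀ α : G, ¬(α ∈ S.Neg ∧ α ∈ S.G₁))

end Setting

end GarsideOrder
namespace GarsideOrder

section Basic
variable {G : Type*} [Group G]

theorem leR_refl (M : Submonoid G) (a : G) : leR M a a := by
  simp [leR, M.one_mem]

theorem leR_trans {M : Submonoid G} {a b c : G} (h1 : leR M a b) (h2 : leR M b c) :
    leR M a c := by
  have h := M.mul_mem h2 h1
  have e : c * b⁻¹ * (b * a⁻¹) = c * a⁻¹ := by group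
  rwa [e] at h

theorem leR_one_iff {M : Submonoid G} {a : G} : leR M 1 a ↔ a ∈ M := by
  simp [leR]

theorem leR_mul_right {M : Submonoid G} {a b : G} (c : G) (h : leR M a b) :
    leR M (a * c) (b * c) := by
  have e : b * c * (a * c)⁻¹ = b * a⁻¹ := by group
  rw [leR, e]; exact h

theorem leR_of_mul_right {M : Submonoid G} {a b c : G} (h : leR M (a * c) (b * c)) :
    leR M a b := by
  have e : b * a⁻¹ = b * c * (a * c)⁻¹ := by group
  rw [leR, e]; exact h

theorem leR_mul_right_iff {M : Submonoid G} {a b c : G} :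
    leR M (a * c) (b * c) ↔ leR M a b :=
  ⟨leR_of_mul_right, leR_mul_right c⟩

/-- `a ≤_R a*b` fails in general;  but `b ≤_R a*b` holds when `a ∈ M`. -/
theorem leR_mul_left {M : Submonoid G} {a b : G} (ha : a ∈ M) : leR M b (a * b) := by
  have e : a * b * b⁻¹ = a := by group
  rw [leR, e]; exact ha

theorem leR_mem {M : Submonoid G} {a b : G} (ha : a ∈ M) (h : leR M a b) : b ∈ M := by
  have := M.mul_mem h ha
  have e : b * a⁻¹ * a = b := by group
  rwa [e] at this

theorem leL_iff_leR_inv {M : Submonoid G} {a b : G} : leL M a b ↔ leR M b⁻¹ a⁻¹ := by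
  simp [leL, leR]

theorem leL_refl (M : Submonoid G) (a : G) : leL M a a := by simp [leL, M.one_mem]

theorem leL_trans {M : Submonoid G} {a b c : G} (h1 : leL M a b) (h2 : leL M b c) :
    leL M a c := by
  rw [leL_iff_leR_inv] at *
  exact leR_trans h2 h1

theorem leL_one_iff {M : Submonoid G} {a : G} : leL M 1 a ↔ a ∈ M := by
  simp [leL]

theorem leL_mul_left {M : Submonoid G} {a b : G} (c : G) (h : leL M a b) :
    leL M (c * a) (c * b) := by
  have e : (c * a)⁻¹ * (c * b) = a⁻¹ * b := by group
  rw [leL, e]; exact h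

theorem leL_of_mul_left {M : Submonoid G} {a b c : G} (h : leL M (c * a) (c * b)) :
    leL M a b := by
  have e : a⁻¹ * b = (c * a)⁻¹ * (c * b) := by group
  rw [leL, e]; exact h

theorem leL_mul_right {M : Submonoid G} {a b : G} (hb : b ∈ M) : leL M a (a * b) := by
  have e : a⁻¹ * (a * b) = b := by group
  rw [leL, e]; exact hb

theorem leL_mem {M : Submonoid G} {a b : G} (ha : a ∈ M) (h : leL M a b) : b ∈ M := by
  have := M.mul_mem ha h
  have e : a * (a⁻¹ * b) = b := by group
  rwa [e] at this

/-- right divisor of a left factor: if `a = b * c` then `c ≤_R a`. -/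
theorem leR_of_eq_mul {M : Submonoid G} {a b c : G} (hb : b ∈ M) (h : a = b * c) :
    leR M c a := by
  subst h
  exact leR_mul_left hb

theorem leL_of_eq_mul {M : Submonoid G} {a b c : G} (hc : c ∈ M) (h : a = b * c) :
    leL M b a := by
  subst h
  exact leL_mul_right hc

end Basic

section SettingBasic
variable {G : Type*} [Group G] (S : Setting G)

theorem Setting.M_antisymm {a b : G} (h1 : leR S.M a b) (h2 : leR S.M b a) : a = b := by
  have h3 := S.garside.units_trivial (a * b⁻¹) h2 (by
    have e : (a * b⁻¹)⁻¹ = b * a⁻¹ := by group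
    rw [e]; exact h1)
  have : a = (a * b⁻¹) * b := by group
  rw [this, h3, one_mul]

theorem Setting.L_antisymm {a b : G} (h1 : leL S.M a b) (h2 : leL S.M b a) : a = b := by
  rw [leL_iff_leR_inv] at h1 h2
  have := S.M_antisymm h1 h2
  exact inv_injective this.symm

theorem Setting.mul_eq_one_left {a b : G} (ha : a ∈ S.M) (hb : b ∈ S.M)
    (h : a * b = 1) : a = 1 := by
  have hbi : a⁻¹ ∈ S.M := by
    have : a⁻¹ = b := inv_eq_of_mul_eq_one_right h
    rw [this]; exact hb
  exact S.garside.units_trivial a ha hbi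

theorem Setting.mul_eq_one_right {a b : G} (ha : a ∈ S.M) (hb : b ∈ S.M)
    (h : a * b = 1) : b = 1 := by
  have := S.mul_eq_one_left ha hb h
  rw [this, one_mul] at h
  exact h

/-- `Δ` is central (in the whole group, since `car = ⊤`). -/
theorem Setting.delta_comm (hcar : S.car = ⊤) (g : G) : S.Δ * g = g * S.Δ :=
  S.delta_central g (by rw [hcar]; trivial)

theorem Setting.delta_pow_comm (hcar : S.car = ⊤) (k : ℕ) (g : G) :
    S.Δ ^ k * g = g * S.Δ ^ k := by
  induction k with
  | zero => simp
  | succ n ih =>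
      rw [pow_succ, mul_assoc, S.delta_comm hcar g, ← mul_assoc, ih, mul_assoc]

theorem Setting.M1_le_M : (S.M₁ : Set G) ⊆ (S.M : Set G) := by
  intro x hx
  refine Submonoid.closure_le.2 ?_ hx
  intro y hy
  exact hy.1

theorem Setting.N_le_M : (S.Nsub : Set G) ⊆ (S.M : Set G) := by
  intro x hx
  refine Submonoid.closure_le.2 ?_ hx
  intro y hy
  exact hy.1

theorem Setting.M1_le_G1 : (S.M₁ : Set G) ⊆ (S.G₁ : Set G) := by
  intro x hx
  have h : parM S.M S.δ1 ≤ (parG S.M S.δ1).toSubmonoid :=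
    Submonoid.closure_le.2 (fun y hy => Subgroup.subset_closure hy)
  exact h hx

/-- `δ₁` commutes with every element of `G₁`. -/
theorem Setting.delta1_comm {g : G} (hg : g ∈ S.G₁) : S.δ1 * g = g * S.δ1 :=
  S.delta1_central g hg

theorem Setting.delta1_pow_comm {g : G} (hg : g ∈ S.G₁) (k : ℕ) :
    S.δ1 ^ k * g = g * S.δ1 ^ k := by
  induction k with
  | zero => simp
  | succ n ih =>
      rw [pow_succ, mul_assoc, S.delta1_comm hg, ← mul_assoc, ih, mul_assoc]

/-- `θ` commutes with every element of `G₁`. -/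
theorem Setting.theta_comm (hcar : S.car = ⊤) {g : G} (hg : g ∈ S.G₁) :
    S.theta * g = g * S.theta := by
  have c1 : Commute S.δ1 g := S.delta1_comm hg
  have c2 : Commute S.Δ g := S.delta_comm hcar g
  exact (c2.mul_left c1.inv_left).eq

theorem Setting.theta_pow_comm (hcar : S.car = ⊤) {g : G} (hg : g ∈ S.G₁) (k : ℕ) :
    S.theta ^ k * g = g * S.theta ^ k := by
  induction k with
  | zero => simp
  | succ n ih =>
      rw [pow_succ, mul_assoc, S.theta_comm hcar hg, ← mul_assoc, ih, mul_assoc]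

theorem Setting.theta_mul_delta1 : S.theta * S.δ1 = S.Δ := by
  show S.Δ * S.δ1⁻¹ * S.δ1 = S.Δ
  group

theorem Setting.delta1_mem_G1 : S.δ1 ∈ S.G₁ := by
  apply S.M1_le_G1
  apply Submonoid.subset_closure
  exact ⟨S.par1.mem, leR_refl _ _⟩

theorem Setting.theta_pow_mul_delta1_pow (hcar : S.car = ⊤) (k : ℕ) :
    S.theta ^ k * S.δ1 ^ k = S.Δ ^ k := by
  have c : Commute S.theta S.δ1 := S.theta_comm hcar S.delta1_mem_G1
  rw [← c.mul_pow, S.theta_mul_delta1]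

end SettingBasic

end GarsideOrder
namespace GarsideOrder

section SettingBasic2
variable {G : Type*} [Group G] (S : Setting G)

theorem Setting.divR_one_sub : DivR S.M (1 : G) ⊆ {(1 : G)} := by
  intro b hb
  have := S.garside.units_trivial b hb.1 (by simpa [leR] using hb.2)
  simp [this]

theorem Setting.delta_ne_one : S.Δ ≠ 1 := by
  intro h
  have hM : ∀ x ∈ S.M, x = 1 := by
    intro x hx
    have h2 : S.M ≤ ⊥ := by
      rw [← S.garside.div_gen_monoid]
      apply Submonoid.closure_le.2
      intro b hb
      rw [h] at hb
      have := S.divR_one_sub hb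
      simpa [Submonoid.mem_bot] using this
    simpa [Submonoid.mem_bot] using h2 hx
  apply S.N_ne
  apply le_antisymm
  · apply Submonoid.closure_le.2
    intro b hb
    exact hb.1
  · intro x hx
    rw [hM x hx]
    exact Submonoid.one_mem _

theorem Setting.one_unmovable : Unmovable S.M S.Δ 1 := by
  refine ⟨Submonoid.one_mem _, fun h => ?_⟩
  have hd : S.Δ⁻¹ ∈ S.M := by simpa [leR] using h
  exact S.delta_ne_one (S.garside.units_trivial S.Δ S.garside.delta_mem hd)

theorem Setting.delta1_mem_divR_delta1 : S.δ1 ∈ DivR S.M S.δ1 :=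
  ⟨S.par1.mem, leR_refl _ _⟩

theorem Setting.delta1_mem_M1 : S.δ1 ∈ S.M₁ :=
  Submonoid.subset_closure S.delta1_mem_divR_delta1

theorem Setting.delta1_leR_delta : leR S.M S.δ1 S.Δ := by
  have h := S.par1.div_eq ▸ S.delta1_mem_divR_delta1
  exact h.1.2

theorem Setting.theta_mem_M : S.theta ∈ S.M := S.delta1_leR_delta

theorem Setting.lam_mem_divR_lam : S.lam ∈ DivR S.M S.lam :=
  ⟨S.parH.mem, leR_refl _ _⟩

theorem Setting.lam_leR_delta : leR S.M S.lam S.Δ := by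
  have h := S.parH.div_eq ▸ S.lam_mem_divR_lam
  exact h.1.2

theorem Setting.theta_ne_one : S.theta ≠ 1 := by
  intro h
  have hΔ : S.Δ = S.δ1 := by
    have : S.Δ * S.δ1⁻¹ = 1 := h
    group at this ⊢
    rw [← one_mul S.δ1, ← this]
    group
  apply S.M1_ne
  apply le_antisymm
  · apply Submonoid.closure_le.2; intro b hb; exact hb.1
  · conv_lhs => rw [← S.garside.div_gen_monoid]
    apply Submonoid.closure_le.2
    intro b hb
    have hb' : b ∈ DivR S.M S.δ1 := by rw [← hΔ]; exact hb
    exact Submonoid.subset_closure hb'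

theorem Setting.delta1_ne_one : S.δ1 ≠ 1 := by
  intro h
  have hM1 : S.M₁ ≤ ⊥ := by
    apply Submonoid.closure_le.2
    intro b hb
    rw [h] at hb
    have := S.divR_one_sub hb
    simpa [Submonoid.mem_bot] using this
  apply S.N_ne
  apply le_antisymm
  · apply Submonoid.closure_le.2; intro b hb; exact hb.1
  · conv_lhs => rw [← S.unionGen]
    apply Submonoid.closure_le.2
    intro b hb
    rcases hb with hb | hb
    · exact hb
    · have := hM1 hb
      simp only [Submonoid.mem_bot] at this
      rw [this]; exact Submonoid.one_mem _

end SettingBasic2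

section Mu
variable {G : Type*} [Group G] (S : Setting G)

def Setting.lenSet (a : G) : Set ℕ :=
  {n | ∃ l : List G, (∀ x ∈ l, x ∈ S.M ∧ x ≠ 1) ∧ l.prod = a ∧ l.length = n}

noncomputable def Setting.mu (a : G) : ℕ := sSup (S.lenSet a)

theorem Setting.lenSet_bddAbove {a : G} (ha : a ∈ S.M) : BddAbove (S.lenSet a) := by
  obtain ⟨n, _, hn⟩ := S.garside.noetherian a ha
  refine ⟨n, fun m hm => ?_⟩
  obtain ⟨l, hl, hprod, hlen⟩ := hm
  rw [← hlen]
  exact hn l hl hprod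

theorem Setting.lenSet_nonempty' {a : G} (ha : a ∈ S.M) : (S.lenSet a).Nonempty := by
  by_cases h : a = 1
  · exact ⟨0, [], by simp, by simp [h], rfl⟩
  · exact ⟨1, [a], by
      intro x hx
      simp only [List.mem_singleton] at hx
      subst hx
      exact ⟨ha, h⟩, by simp, rfl⟩

theorem Setting.mu_mem {a : G} (ha : a ∈ S.M) : S.mu a ∈ S.lenSet a :=
  Nat.sSup_mem (S.lenSet_nonempty' ha) (S.lenSet_bddAbove ha)

theorem Setting.le_mu {a : G} (ha : a ∈ S.M) {n : ℕ} (hn : n ∈ S.lenSet a) : n ≤ S.mu a :=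
  le_csSup (S.lenSet_bddAbove ha) hn

theorem Setting.mu_superadd {a b : G} (ha : a ∈ S.M) (hb : b ∈ S.M) :
    S.mu a + S.mu b ≤ S.mu (a * b) := by
  obtain ⟨la, hla, hpa, hna⟩ := S.mu_mem ha
  obtain ⟨lb, hlb, hpb, hnb⟩ := S.mu_mem hb
  apply S.le_mu (S.M.mul_mem ha hb)
  refine ⟨la ++ lb, ?_, ?_, ?_⟩
  · intro x hx
    rcases List.mem_append.1 hx with h | h
    · exact hla x h
    · exact hlb x h
  · rw [List.prod_append, hpa, hpb]
  · rw [List.length_append, hna, hnb]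

theorem Setting.mu_pos {a : G} (ha : a ∈ S.M) (hne : a ≠ 1) : 1 ≤ S.mu a := by
  apply S.le_mu ha
  exact ⟨[a], by intro x hx; simp only [List.mem_singleton] at hx; subst hx; exact ⟨ha, hne⟩,
    by simp, rfl⟩

/-- if `a = b * c` with `b, c ∈ M` and `b ≠ 1` then `mu c < mu a`. -/
theorem Setting.mu_lt_of_eq_mul {a b c : G} (hb : b ∈ S.M) (hc : c ∈ S.M) (hbne : b ≠ 1)
    (h : a = b * c) : S.mu c < S.mu a := by
  have h1 := S.mu_superadd hb hc
  have h2 := S.mu_pos hb hbne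
  rw [← h] at h1
  omega

theorem Setting.mu_lt_of_eq_mul' {a b c : G} (hb : b ∈ S.M) (hc : c ∈ S.M) (hcne : c ≠ 1)
    (h : a = b * c) : S.mu b < S.mu a := by
  have h1 := S.mu_superadd hb hc
  have h2 := S.mu_pos hc hcne
  rw [← h] at h1
  omega

theorem Setting.mu_le_of_leR {a b : G} (ha : a ∈ S.M) (hb : b ∈ S.M)
    (hab : leR S.M b a) : S.mu b ≤ S.mu a := by
  have hm : a * b⁻¹ ∈ S.M := hab
  have h1 := S.mu_superadd hm hb
  have he : a * b⁻¹ * b = a := by group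
  rw [he] at h1
  omega

theorem Setting.mu_lt_of_leR {a b : G} (ha : a ∈ S.M) (hb : b ∈ S.M)
    (hab : leR S.M b a) (hne : b ≠ a) : S.mu b < S.mu a := by
  have hm : a * b⁻¹ ∈ S.M := hab
  have hne' : a * b⁻¹ ≠ 1 := by
    intro h
    apply hne
    have : a = a * b⁻¹ * b := by group
    rw [this, h, one_mul]
  exact S.mu_lt_of_eq_mul hm hb hne' (by group)

end Mu

end GarsideOrder
namespace GarsideOrder

section Lattice
variable {G : Type*} [Group G] (S : Setting G)

theorem Setting.mem_car (hcar : S.car = ⊤) (g : G) : g ∈ S.car := by rw [hcar]; trivial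

variable (hcar : S.car = ⊤)

noncomputable def Setting.jn (a b : G) : G :=
  (S.garside.join a (S.mem_car hcar a) b (S.mem_car hcar b)).choose

theorem Setting.jn_left (a b : G) : leR S.M a (S.jn hcar a b) :=
  (S.garside.join a (S.mem_car hcar a) b (S.mem_car hcar b)).choose_spec.2.1

theorem Setting.jn_right (a b : G) : leR S.M b (S.jn hcar a b) :=
  (S.garside.join a (S.mem_car hcar a) b (S.mem_car hcar b)).choose_spec.2.2.1

theorem Setting.jn_le {a b d : G} (h1 : leR S.M a d) (h2 : leR S.M b d) :
    leR S.M (S.jn hcar a b) d :=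
  (S.garside.join a (S.mem_car hcar a) b (S.mem_car hcar b)).choose_spec.2.2.2
    d (S.mem_car hcar d) h1 h2

theorem Setting.jn_mem {a b : G} (ha : a ∈ S.M) : S.jn hcar a b ∈ S.M :=
  leR_mem ha (S.jn_left hcar a b)

theorem Setting.jn_unique {a b j : G} (h1 : leR S.M a j) (h2 : leR S.M b j)
    (h3 : ∀ d, leR S.M a d → leR S.M b d → leR S.M j d) : j = S.jn hcar a b :=
  S.M_antisymm (h3 _ (S.jn_left hcar a b) (S.jn_right hcar a b))
    (S.jn_le hcar h1 h2)

theorem Setting.jn_translate (a b c : G) :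
    S.jn hcar (a * c) (b * c) = S.jn hcar a b * c := by
  symm
  apply S.jn_unique hcar
  · exact leR_mul_right c (S.jn_left hcar a b)
  · exact leR_mul_right c (S.jn_right hcar a b)
  · intro d h1 h2
    have hd : d = d * c⁻¹ * c := by group
    rw [hd] at h1 h2 ⊢
    rw [leR_mul_right_iff] at h1 h2 ⊢
    exact S.jn_le hcar h1 h2

noncomputable def Setting.mt (a b : G) : G :=
  (S.garside.meet a (S.mem_car hcar a) b (S.mem_car hcar b)).choose

theorem Setting.mt_left (a b : G) : leR S.M (S.mt hcar a b) a :=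
  (S.garside.meet a (S.mem_car hcar a) b (S.mem_car hcar b)).choose_spec.2.1

theorem Setting.mt_right (a b : G) : leR S.M (S.mt hcar a b) b :=
  (S.garside.meet a (S.mem_car hcar a) b (S.mem_car hcar b)).choose_spec.2.2.1

theorem Setting.le_mt {a b d : G} (h1 : leR S.M d a) (h2 : leR S.M d b) :
    leR S.M d (S.mt hcar a b) :=
  (S.garside.meet a (S.mem_car hcar a) b (S.mem_car hcar b)).choose_spec.2.2.2
    d (S.mem_car hcar d) h1 h2

theorem Setting.mt_mem {a b : G} (ha : a ∈ S.M) (hb : b ∈ S.M) : S.mt hcar a b ∈ S.M := by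
  rw [← leR_one_iff] at ha hb ⊢
  exact S.le_mt hcar ha hb

theorem Setting.mt_unique {a b m : G} (h1 : leR S.M m a) (h2 : leR S.M m b)
    (h3 : ∀ d, leR S.M d a → leR S.M d b → leR S.M d m) : m = S.mt hcar a b :=
  S.M_antisymm (S.le_mt hcar h1 h2)
    (h3 _ (S.mt_left hcar a b) (S.mt_right hcar a b))

theorem Setting.mt_translate (a b c : G) :
    S.mt hcar (a * c) (b * c) = S.mt hcar a b * c := by
  symm
  apply S.mt_unique hcar
  · exact leR_mul_right c (S.mt_left hcar a b)
  · exact leR_mul_right c (S.mt_right hcar a b)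
  · intro d h1 h2
    have hd : d = d * c⁻¹ * c := by group
    rw [hd] at h1 h2 ⊢
    rw [leR_mul_right_iff] at h1 h2 ⊢
    exact S.le_mt hcar h1 h2

/-- left join -/
noncomputable def Setting.ljn (a b : G) : G := (S.mt hcar a⁻¹ b⁻¹)⁻¹

theorem Setting.ljn_left (a b : G) : leL S.M a (S.ljn hcar a b) := by
  rw [leL_iff_leR_inv, Setting.ljn, inv_inv]
  exact S.mt_left hcar _ _

theorem Setting.ljn_right (a b : G) : leL S.M b (S.ljn hcar a b) := by
  rw [leL_iff_leR_inv, Setting.ljn, inv_inv]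
  exact S.mt_right hcar _ _

theorem Setting.ljn_le {a b d : G} (h1 : leL S.M a d) (h2 : leL S.M b d) :
    leL S.M (S.ljn hcar a b) d := by
  rw [leL_iff_leR_inv] at h1 h2 ⊢
  rw [Setting.ljn, inv_inv]
  exact S.le_mt hcar h1 h2

theorem Setting.ljn_mem {a b : G} (ha : a ∈ S.M) : S.ljn hcar a b ∈ S.M :=
  leL_mem ha (S.ljn_left hcar a b)

/-- left meet -/
noncomputable def Setting.lmt (a b : G) : G := (S.jn hcar a⁻¹ b⁻¹)⁻¹

theorem Setting.lmt_left (a b : G) : leL S.M (S.lmt hcar a b) a := by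
  rw [leL_iff_leR_inv, Setting.lmt, inv_inv]
  exact S.jn_left hcar _ _

theorem Setting.lmt_right (a b : G) : leL S.M (S.lmt hcar a b) b := by
  rw [leL_iff_leR_inv, Setting.lmt, inv_inv]
  exact S.jn_right hcar _ _

theorem Setting.le_lmt {a b d : G} (h1 : leL S.M d a) (h2 : leL S.M d b) :
    leL S.M d (S.lmt hcar a b) := by
  rw [leL_iff_leR_inv] at h1 h2 ⊢
  rw [Setting.lmt, inv_inv]
  exact S.jn_le hcar h1 h2

theorem Setting.lmt_mem {a b : G} (ha : a ∈ S.M) (hb : b ∈ S.M) : S.lmt hcar a b ∈ S.M := by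
  rw [← leL_one_iff] at ha hb ⊢
  exact S.le_lmt hcar ha hb

theorem Setting.lmt_translate (a b c : G) :
    S.lmt hcar (c * a) (c * b) = c * S.lmt hcar a b := by
  have h : (c * a)⁻¹ = a⁻¹ * c⁻¹ := by group
  have h2 : (c * b)⁻¹ = b⁻¹ * c⁻¹ := by group
  rw [Setting.lmt, h, h2, S.jn_translate hcar, Setting.lmt]
  group

theorem Setting.ljn_translate (a b c : G) :
    S.ljn hcar (c * a) (c * b) = c * S.ljn hcar a b := by
  have h : (c * a)⁻¹ = a⁻¹ * c⁻¹ := by group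
  have h2 : (c * b)⁻¹ = b⁻¹ * c⁻¹ := by group
  rw [Setting.ljn, h, h2, S.mt_translate hcar, Setting.ljn]
  group

end Lattice

end GarsideOrder
namespace GarsideOrder

section Parabolic
variable {G : Type*} [Group G] (S : Setting G)
variable {δ : G} (hδ : IsParabolic S.M S.Δ δ)
theorem Setting.parM_le_M : parM S.M δ ≤ S.M :=
  Submonoid.closure_le.2 (fun _ hy => hy.1)

/-- transfer through balancedness of Δ -/
theorem Setting.divΔ_leL {x : G} (hx : x ∈ DivR S.M S.Δ) : leL S.M x S.Δ := by
  have h := S.garside.balanced ▸ hx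
  exact h.2

theorem Setting.divΔ_of_leL {x : G} (hx : x ∈ S.M) (h : leL S.M x S.Δ) :
    x ∈ DivR S.M S.Δ := by
  rw [S.garside.balanced]
  exact ⟨hx, h⟩

theorem Setting.divΔ_of_leR_divΔ' {z s : G} (hz : z ∈ S.M) (hs : s ∈ DivR S.M S.Δ)
    (h : leR S.M z s) : z ∈ DivR S.M S.Δ :=
  ⟨hz, leR_trans h hs.2⟩

include hδ

theorem Setting.divδ_leL {x : G} (hx : x ∈ DivR S.M δ) : leL S.M x δ := by
  have h := hδ.balanced ▸ hx
  exact h.2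

theorem Setting.divδ_of_leL {x : G} (hx : x ∈ S.M) (h : leL S.M x δ) :
    x ∈ DivR S.M δ := by
  rw [hδ.balanced]
  exact ⟨hx, h⟩

theorem Setting.divδ_sub_divΔ : DivR S.M δ ⊆ DivR S.M S.Δ := by
  intro x hx
  exact (hδ.div_eq ▸ hx).1

omit hδ in
theorem Setting.divδ_sub_parM : DivR S.M δ ⊆ (parM S.M δ : Set G) :=
  Submonoid.subset_closure

omit hδ in
/-- right divisors (in `M`) of elements of `Div δ` are in `Div δ`. -/
theorem Setting.divδ_of_leR_divδ {z s : G} (hz : z ∈ S.M) (hs : s ∈ DivR S.M δ)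
    (h : leR S.M z s) : z ∈ DivR S.M δ :=
  ⟨hz, leR_trans h hs.2⟩

/-- left divisors (in `M`) of elements of `Div δ` are in `Div δ`. -/
theorem Setting.divδ_of_leL_divδ {z s : G} (hz : z ∈ S.M) (hs : s ∈ DivR S.M δ)
    (h : leL S.M z s) : z ∈ DivR S.M δ :=
  S.divδ_of_leL hδ hz (leL_trans h (S.divδ_leL hδ hs))

/-- the left complement `δ x⁻¹` of a divisor is a divisor. -/
theorem Setting.compl_left_divδ {x : G} (hx : x ∈ DivR S.M δ) : δ * x⁻¹ ∈ DivR S.M δ := by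
  apply S.divδ_of_leL hδ hx.2
  show (δ * x⁻¹)⁻¹ * δ ∈ S.M
  have e : (δ * x⁻¹)⁻¹ * δ = x := by group
  rw [e]; exact hx.1

/-- the right complement `x⁻¹ δ` of a divisor is a divisor. -/
theorem Setting.compl_right_divδ {x : G} (hx : x ∈ DivR S.M δ) : x⁻¹ * δ ∈ DivR S.M δ := by
  have h1 : x⁻¹ * δ ∈ S.M := S.divδ_leL hδ hx
  refine ⟨h1, ?_⟩
  show δ * (x⁻¹ * δ)⁻¹ ∈ S.M
  have e : δ * (x⁻¹ * δ)⁻¹ = x := by group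
  rw [e]; exact hx.1

theorem Setting.conj_divδ {x : G} (hx : x ∈ DivR S.M δ) : δ * x * δ⁻¹ ∈ DivR S.M δ := by
  have h1 := S.compl_left_divδ hδ hx
  have h2 := S.compl_left_divδ hδ h1
  have e : δ * (δ * x⁻¹)⁻¹ = δ * x * δ⁻¹ := by group
  rwa [e] at h2

theorem Setting.conj_inv_divδ {x : G} (hx : x ∈ DivR S.M δ) : δ⁻¹ * x * δ ∈ DivR S.M δ := by
  have hfin : (DivR S.M δ).Finite :=
    S.garside.div_finite.subset (S.divδ_sub_divΔ hδ)
  have hmaps : Set.MapsTo (fun y => δ * y * δ⁻¹) (DivR S.M δ) (DivR S.M δ) :=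
    fun y hy => S.conj_divδ hδ hy
  have hinj : Set.InjOn (fun y => δ * y * δ⁻¹) (DivR S.M δ) := by
    intro a _ b _ h
    simp only at h
    have : a = δ⁻¹ * (δ * a * δ⁻¹) * δ := by group
    rw [this, h]; group
  have hsurj : Set.SurjOn (fun y => δ * y * δ⁻¹) (DivR S.M δ) (DivR S.M δ) :=
    ((hfin.injOn_iff_bijOn_of_mapsTo hmaps).mp hinj).surjOn
  obtain ⟨y, hy, hxy⟩ := hsurj hx
  simp only at hxy
  have : δ⁻¹ * x * δ = y := by rw [← hxy]; group
  rw [this]; exact hy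

theorem Setting.conj_parM {x : G} (hx : x ∈ parM S.M δ) : δ * x * δ⁻¹ ∈ parM S.M δ := by
  induction hx using Submonoid.closure_induction with
  | mem y hy => exact Submonoid.subset_closure (S.conj_divδ hδ hy)
  | one => simpa using Submonoid.one_mem _
  | mul y z _ _ hy hz =>
      have e : δ * (y * z) * δ⁻¹ = (δ * y * δ⁻¹) * (δ * z * δ⁻¹) := by group
      rw [e]; exact Submonoid.mul_mem _ hy hz

theorem Setting.conj_inv_parM {x : G} (hx : x ∈ parM S.M δ) : δ⁻¹ * x * δ ∈ parM S.M δ := by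
  induction hx using Submonoid.closure_induction with
  | mem y hy => exact Submonoid.subset_closure (S.conj_inv_divδ hδ hy)
  | one => simpa using Submonoid.one_mem _
  | mul y z _ _ hy hz =>
      have e : δ⁻¹ * (y * z) * δ = (δ⁻¹ * y * δ) * (δ⁻¹ * z * δ) := by group
      rw [e]; exact Submonoid.mul_mem _ hy hz

theorem Setting.conj_pow_parM {x : G} (hx : x ∈ parM S.M δ) (n : ℕ) :
    δ ^ n * x * (δ ^ n)⁻¹ ∈ parM S.M δ := by
  induction n with
  | zero => simpa using hx
  | succ n ih =>
      have e : δ ^ (n+1) * x * (δ ^ (n+1))⁻¹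
          = δ * (δ ^ n * x * (δ ^ n)⁻¹) * δ⁻¹ := by
        rw [pow_succ]
        group
      rw [e]
      exact S.conj_parM hδ ih

theorem Setting.conj_pow_inv_parM {x : G} (hx : x ∈ parM S.M δ) (n : ℕ) :
    (δ ^ n)⁻¹ * x * δ ^ n ∈ parM S.M δ := by
  induction n with
  | zero => simpa using hx
  | succ n ih =>
      have e : (δ ^ (n+1))⁻¹ * x * δ ^ (n+1)
          = δ⁻¹ * ((δ ^ n)⁻¹ * x * δ ^ n) * δ := by
        rw [pow_succ]
        group
      rw [e]
      exact S.conj_inv_parM hδ ih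

end Parabolic

end GarsideOrder
namespace GarsideOrder

section Parabolic2
variable {G : Type*} [Group G] (S : Setting G)
variable {δ : G} (hδ : IsParabolic S.M S.Δ δ)

omit hδ in
theorem Setting.one_mem_divδ (hm : δ ∈ S.M) : (1 : G) ∈ DivR S.M δ :=
  ⟨Submonoid.one_mem _, by simpa [leR] using hm⟩

omit hδ in
theorem Setting.eq_one_of_leR_one {d : G} (hd : d ∈ S.M) (h : leR S.M d 1) : d = 1 := by
  have hdi : d⁻¹ ∈ S.M := by simpa [leR] using h
  exact S.garside.units_trivial d hd hdi

omit hδ in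
theorem Setting.pow_leR_pow {m m' : ℕ} (hm : δ ∈ S.M) (h : m ≤ m') :
    leR S.M (δ ^ m) (δ ^ m') := by
  obtain ⟨k, rfl⟩ := Nat.exists_eq_add_of_le h
  show δ ^ (m + k) * (δ ^ m)⁻¹ ∈ S.M
  have e : δ ^ (m + k) * (δ ^ m)⁻¹ = δ ^ k := by
    rw [pow_add]
    group
  rw [e]
  exact Submonoid.pow_mem _ hm k

omit hδ in
theorem Setting.pow_leL_pow {m m' : ℕ} (hm : δ ∈ S.M) (h : m ≤ m') :
    leL S.M (δ ^ m) (δ ^ m') := by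
  obtain ⟨k, rfl⟩ := Nat.exists_eq_add_of_le h
  show (δ ^ m)⁻¹ * δ ^ (m + k) ∈ S.M
  have e : (δ ^ m)⁻¹ * δ ^ (m + k) = δ ^ k := by
    rw [pow_add]
    group
  rw [e]
  exact Submonoid.pow_mem _ hm k

include hδ

theorem Setting.delta_mem_parM : δ ∈ parM S.M δ :=
  Submonoid.subset_closure ⟨hδ.mem, leR_refl _ _⟩

theorem Setting.list_decomp_right (l : List G) (hl : ∀ y ∈ l, y ∈ DivR S.M δ)
    (hne : l.prod ≠ 1) :
    ∃ y ∈ parM S.M δ, ∃ s ∈ DivR S.M δ, s ≠ 1 ∧ l.prod = y * s := by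
  induction l using List.reverseRecOn with
  | nil => simp at hne
  | append_singleton l' s ih =>
      rw [List.prod_append, List.prod_singleton] at hne ⊢
      have hs : s ∈ DivR S.M δ := hl s (by simp)
      by_cases h1 : s = 1
      · subst h1
        rw [mul_one] at hne ⊢
        exact ih (fun y hy => hl y (by simp [hy])) hne
      · exact ⟨l'.prod,
          Submonoid.list_prod_mem _
            (fun y hy => Submonoid.subset_closure (hl y (by simp [hy]))),
          s, hs, h1, rfl⟩

theorem Setting.parM_decomp_right {x : G} (hx : x ∈ parM S.M δ) (hne : x ≠ 1) :
    ∃ y ∈ parM S.M δ, ∃ s ∈ DivR S.M δ, s ≠ 1 ∧ x = y * s := by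
  obtain ⟨l, hl, hprod⟩ := Submonoid.exists_list_of_mem_closure hx
  rw [← hprod]
  exact S.list_decomp_right hδ l hl (by rw [hprod]; exact hne)

theorem Setting.list_decomp_left (l : List G) (hl : ∀ y ∈ l, y ∈ DivR S.M δ)
    (hne : l.prod ≠ 1) :
    ∃ s ∈ DivR S.M δ, s ≠ 1 ∧ ∃ y ∈ parM S.M δ, l.prod = s * y := by
  induction l with
  | nil => simp at hne
  | cons s l' ih =>
      rw [List.prod_cons] at hne ⊢
      have hs : s ∈ DivR S.M δ := hl s (by simp)
      by_cases h1 : s = 1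
      · subst h1
        rw [one_mul] at hne ⊢
        exact ih (fun y hy => hl y (by simp [hy])) hne
      · exact ⟨s, hs, h1, l'.prod,
          Submonoid.list_prod_mem _
            (fun y hy => Submonoid.subset_closure (hl y (by simp [hy]))), rfl⟩

theorem Setting.parM_decomp_left {x : G} (hx : x ∈ parM S.M δ) (hne : x ≠ 1) :
    ∃ s ∈ DivR S.M δ, s ≠ 1 ∧ ∃ y ∈ parM S.M δ, x = s * y := by
  obtain ⟨l, hl, hprod⟩ := Submonoid.exists_list_of_mem_closure hx
  rw [← hprod]
  exact S.list_decomp_left hδ l hl (by rw [hprod]; exact hne)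

theorem Setting.list_leR_pow (l : List G) (hl : ∀ y ∈ l, y ∈ DivR S.M δ) :
    ∃ m : ℕ, ∃ W ∈ parM S.M δ, δ ^ m = W * l.prod := by
  induction l using List.reverseRecOn with
  | nil => exact ⟨0, 1, Submonoid.one_mem _, by simp⟩
  | append_singleton l' g ih =>
      obtain ⟨m, W, hW, hpow⟩ := ih (fun y hy => hl y (by simp [hy]))
      have hg : g ∈ DivR S.M δ := hl g (by simp)
      have hcompl : δ * g⁻¹ ∈ DivR S.M δ := S.compl_left_divδ hδ hg
      refine ⟨m + 1, δ ^ m * (δ * g⁻¹) * (δ ^ m)⁻¹ * W,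
        Submonoid.mul_mem _
          (S.conj_pow_parM hδ (S.divδ_sub_parM hcompl) m) hW, ?_⟩
      rw [List.prod_append, List.prod_singleton]
      have e : δ ^ m * (δ * g⁻¹) * (δ ^ m)⁻¹ * W * (l'.prod * g)
          = δ ^ m * (δ * g⁻¹) * (δ ^ m)⁻¹ * (W * l'.prod) * g := by group
      rw [e, ← hpow, pow_succ]
      group

theorem Setting.parM_leR_pow {x : G} (hx : x ∈ parM S.M δ) :
    ∃ m : ℕ, ∃ W ∈ parM S.M δ, δ ^ m = W * x := by
  obtain ⟨l, hl, hprod⟩ := Submonoid.exists_list_of_mem_closure hx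
  rw [← hprod]
  exact S.list_leR_pow hδ l hl

theorem Setting.list_leL_pow (l : List G) (hl : ∀ y ∈ l, y ∈ DivR S.M δ) :
    ∃ m : ℕ, ∃ W ∈ parM S.M δ, δ ^ m = l.prod * W := by
  induction l with
  | nil => exact ⟨0, 1, Submonoid.one_mem _, by simp⟩
  | cons g l' ih =>
      obtain ⟨m, W, hW, hpow⟩ := ih (fun y hy => hl y (by simp [hy]))
      have hg : g ∈ DivR S.M δ := hl g (by simp)
      have hcompl : g⁻¹ * δ ∈ DivR S.M δ := S.compl_right_divδ hδ hg
      refine ⟨m + 1, W * ((δ ^ m)⁻¹ * (g⁻¹ * δ) * δ ^ m),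
        Submonoid.mul_mem _ hW
          (S.conj_pow_inv_parM hδ (S.divδ_sub_parM hcompl) m), ?_⟩
      rw [List.prod_cons]
      have e : g * l'.prod * (W * ((δ ^ m)⁻¹ * (g⁻¹ * δ) * δ ^ m))
          = g * (l'.prod * W) * ((δ ^ m)⁻¹ * (g⁻¹ * δ) * δ ^ m) := by group
      rw [e, ← hpow, pow_succ]
      group

theorem Setting.parM_leL_pow {x : G} (hx : x ∈ parM S.M δ) :
    ∃ m : ℕ, ∃ W ∈ parM S.M δ, δ ^ m = x * W := by
  obtain ⟨l, hl, hprod⟩ := Submonoid.exists_list_of_mem_closure hx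
  rw [← hprod]
  exact S.list_leL_pow hδ l hl

theorem Setting.parM_leR_pow' {x : G} (hx : x ∈ parM S.M δ) :
    ∃ m : ℕ, leR S.M x (δ ^ m) := by
  obtain ⟨m, W, hW, hpow⟩ := S.parM_leR_pow hδ hx
  refine ⟨m, ?_⟩
  show δ ^ m * x⁻¹ ∈ S.M
  rw [hpow]
  have e : W * x * x⁻¹ = W := by group
  rw [e]
  exact S.parM_le_M hW

theorem Setting.parM_leL_pow' {x : G} (hx : x ∈ parM S.M δ) :
    ∃ m : ℕ, leL S.M x (δ ^ m) := by
  obtain ⟨m, W, hW, hpow⟩ := S.parM_leL_pow hδ hx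
  refine ⟨m, ?_⟩
  show x⁻¹ * δ ^ m ∈ S.M
  rw [hpow]
  have e : x⁻¹ * (x * W) = W := by group
  rw [e]
  exact S.parM_le_M hW

end Parabolic2

end GarsideOrder
namespace GarsideOrder

section Klemmas
variable {G : Type*} [Group G] (S : Setting G)
variable {δ : G} (hδ : IsParabolic S.M S.Δ δ)

omit hδ in
theorem Setting.eq_one_of_leL_one {d : G} (hd : d ∈ S.M) (h : leL S.M d 1) : d = 1 := by
  have hdi : d⁻¹ ∈ S.M := by simpa [leL] using h
  exact S.garside.units_trivial d hd hdi

omit hδ in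
theorem Setting.parM_delta_eq : parM S.M S.Δ = S.M := S.garside.div_gen_monoid

omit hδ in
theorem Setting.deltaParabolic : IsParabolic S.M S.Δ S.Δ := by
  refine ⟨S.garside.delta_mem, S.garside.balanced, ?_⟩
  ext b
  constructor
  · intro h
    refine ⟨h, ?_⟩
    have : b ∈ S.M := h.1
    rw [show (parM S.M S.Δ : Set G) = (S.M : Set G) by rw [S.parM_delta_eq]]
    exact this
  · intro h
    exact h.1

omit hδ in
theorem Setting.M_decomp_right {x : G} (hx : x ∈ S.M) (hne : x ≠ 1) :
    ∃ y ∈ S.M, ∃ g ∈ DivR S.M S.Δ, g ≠ 1 ∧ x = y * g := by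
  have hx' : x ∈ parM S.M S.Δ := by rw [S.parM_delta_eq]; exact hx
  obtain ⟨y, hy, s, hs, hs1, hxys⟩ := S.parM_decomp_right S.deltaParabolic hx' hne
  rw [S.parM_delta_eq] at hy
  exact ⟨y, hy, s, hs, hs1, hxys⟩

omit hδ in
theorem Setting.M_decomp_left {x : G} (hx : x ∈ S.M) (hne : x ≠ 1) :
    ∃ g ∈ DivR S.M S.Δ, g ≠ 1 ∧ ∃ y ∈ S.M, x = g * y := by
  have hx' : x ∈ parM S.M S.Δ := by rw [S.parM_delta_eq]; exact hx
  obtain ⟨s, hs, hs1, y, hy, hxys⟩ := S.parM_decomp_left S.deltaParabolic hx' hne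
  rw [S.parM_delta_eq] at hy
  exact ⟨s, hs, hs1, y, hy, hxys⟩

include hδ

theorem Setting.K_simple (hcar : S.car = ⊤) : ∀ n : ℕ, ∀ x ∈ parM S.M δ, S.mu x ≤ n →
    ∀ d ∈ DivR S.M S.Δ, leR S.M d x → d ∈ DivR S.M δ := by
  intro n
  induction n with
  | zero =>
      intro x hx hmu d hd hdx
      have hx1 : x = 1 := by
        by_contra h
        have := S.mu_pos (S.parM_le_M hx) h
        omega
      subst hx1
      have hd1 : d = 1 := S.eq_one_of_leR_one hd.1 hdx
      subst hd1
      exact S.one_mem_divδ hδ.mem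
  | succ n ih =>
      intro x hx hmu d hd hdx
      by_cases hx1 : x = 1
      · subst hx1
        have hd1 : d = 1 := S.eq_one_of_leR_one hd.1 hdx
        subst hd1
        exact S.one_mem_divδ hδ.mem
      obtain ⟨y, hy, s, hs, hs1, hxys⟩ := S.parM_decomp_right hδ hx hx1
      have hyM : y ∈ S.M := S.parM_le_M hy
      have hsx : leR S.M s x := leR_of_eq_mul hyM hxys
      set P := S.jn hcar d s with hP
      have hPx : leR S.M P x := S.jn_le hcar hdx hsx
      have hPΔ : leR S.M P S.Δ := S.jn_le hcar hd.2 (S.divδ_sub_divΔ hδ hs).2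
      have hPM : P ∈ S.M := S.jn_mem hcar hd.1
      have hsP : leR S.M s P := S.jn_right hcar d s
      have heM : P * s⁻¹ ∈ S.M := hsP
      have hey : leR S.M (P * s⁻¹) y := by
        show y * (P * s⁻¹)⁻¹ ∈ S.M
        have e : y * (P * s⁻¹)⁻¹ = (y * s) * P⁻¹ := by group
        rw [e, ← hxys]
        exact hPx
      have heΔ : P * s⁻¹ ∈ DivR S.M S.Δ := by
        apply S.divΔ_of_leL heM
        apply leL_trans _ (S.divΔ_leL ⟨hPM, hPΔ⟩)
        show (P * s⁻¹)⁻¹ * P ∈ S.M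
        have e : (P * s⁻¹)⁻¹ * P = s := by group
        rw [e]; exact hs.1
      have hmuy : S.mu y ≤ n := by
        have := S.mu_lt_of_eq_mul' hyM hs.1 hs1 hxys
        omega
      have heδ : P * s⁻¹ ∈ DivR S.M δ := ih y hy hmuy _ heΔ hey
      have hPparM : P ∈ parM S.M δ := by
        have e : P = (P * s⁻¹) * s := by group
        rw [e]
        exact Submonoid.mul_mem _ (S.divδ_sub_parM heδ) (S.divδ_sub_parM hs)
      have hPδ : P ∈ DivR S.M δ := by
        rw [hδ.div_eq]
        exact ⟨⟨hPM, hPΔ⟩, hPparM⟩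
      exact S.divδ_of_leR_divδ hd.1 hPδ (S.jn_left hcar d s)

theorem Setting.K_simple_left (hcar : S.car = ⊤) : ∀ n : ℕ, ∀ x ∈ parM S.M δ, S.mu x ≤ n →
    ∀ d ∈ DivR S.M S.Δ, leL S.M d x → d ∈ DivR S.M δ := by
  intro n
  induction n with
  | zero =>
      intro x hx hmu d hd hdx
      have hx1 : x = 1 := by
        by_contra h
        have := S.mu_pos (S.parM_le_M hx) h
        omega
      subst hx1
      have hd1 : d = 1 := S.eq_one_of_leL_one hd.1 hdx
      subst hd1
      exact S.one_mem_divδ hδ.mem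
  | succ n ih =>
      intro x hx hmu d hd hdx
      by_cases hx1 : x = 1
      · subst hx1
        have hd1 : d = 1 := S.eq_one_of_leL_one hd.1 hdx
        subst hd1
        exact S.one_mem_divδ hδ.mem
      obtain ⟨s, hs, hs1, y, hy, hxys⟩ := S.parM_decomp_left hδ hx hx1
      have hyM : y ∈ S.M := S.parM_le_M hy
      have hsx : leL S.M s x := leL_of_eq_mul hyM hxys
      set P := S.ljn hcar d s with hP
      have hPx : leL S.M P x := S.ljn_le hcar hdx hsx
      have hPΔ : leL S.M P S.Δ :=
        S.ljn_le hcar (S.divΔ_leL hd) (S.divΔ_leL (S.divδ_sub_divΔ hδ hs))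
      have hPM : P ∈ S.M := S.ljn_mem hcar hd.1
      have hsP : leL S.M s P := S.ljn_right hcar d s
      have heM : s⁻¹ * P ∈ S.M := hsP
      have hPdivΔ : P ∈ DivR S.M S.Δ := S.divΔ_of_leL hPM hPΔ
      have hey : leL S.M (s⁻¹ * P) y := by
        show (s⁻¹ * P)⁻¹ * y ∈ S.M
        have e : (s⁻¹ * P)⁻¹ * y = P⁻¹ * (s * y) := by group
        rw [e, ← hxys]
        exact hPx
      have heΔ : s⁻¹ * P ∈ DivR S.M S.Δ := by
        apply S.divΔ_of_leR_divΔ' heM hPdivΔ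
        show P * (s⁻¹ * P)⁻¹ ∈ S.M
        have e : P * (s⁻¹ * P)⁻¹ = s := by group
        rw [e]; exact hs.1
      have hmuy : S.mu y ≤ n := by
        have := S.mu_lt_of_eq_mul hs.1 hyM hs1 hxys
        omega
      have heδ : s⁻¹ * P ∈ DivR S.M δ := ih y hy hmuy _ heΔ hey
      have hPparM : P ∈ parM S.M δ := by
        have e : P = s * (s⁻¹ * P) := by group
        rw [e]
        exact Submonoid.mul_mem _ (S.divδ_sub_parM hs) (S.divδ_sub_parM heδ)
      have hPδ : P ∈ DivR S.M δ := by
        rw [hδ.div_eq]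
        exact ⟨hPdivΔ, hPparM⟩
      exact S.divδ_of_leL_divδ hδ hd.1 hPδ (S.ljn_left hcar d s)

theorem Setting.quot_right (hcar : S.car = ⊤) : ∀ n : ℕ, ∀ x ∈ parM S.M δ, S.mu x ≤ n →
    ∀ h ∈ DivR S.M δ, leR S.M h x → x * h⁻¹ ∈ parM S.M δ := by
  intro n
  induction n with
  | zero =>
      intro x hx hmu h hh hhx
      have hx1 : x = 1 := by
        by_contra hc
        have := S.mu_pos (S.parM_le_M hx) hc
        omega
      subst hx1
      have h1 : h = 1 := S.eq_one_of_leR_one hh.1 hhx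
      subst h1
      simpa using Submonoid.one_mem _
  | succ n ih =>
      intro x hx hmu h hh hhx
      by_cases hx1 : x = 1
      · subst hx1
        have h1 : h = 1 := S.eq_one_of_leR_one hh.1 hhx
        subst h1
        simpa using Submonoid.one_mem _
      obtain ⟨y, hy, s, hs, hs1, hxys⟩ := S.parM_decomp_right hδ hx hx1
      have hyM : y ∈ S.M := S.parM_le_M hy
      have hsx : leR S.M s x := leR_of_eq_mul hyM hxys
      set P := S.jn hcar h s with hP
      have hPx : leR S.M P x := S.jn_le hcar hhx hsx
      have hPM : P ∈ S.M := S.jn_mem hcar hh.1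
      have hPδ : P ∈ DivR S.M δ := ⟨hPM, S.jn_le hcar hh.2 hs.2⟩
      have hsP : leR S.M s P := S.jn_right hcar h s
      have heM : P * s⁻¹ ∈ S.M := hsP
      have heδ : P * s⁻¹ ∈ DivR S.M δ := by
        apply S.divδ_of_leL_divδ hδ heM hPδ
        show (P * s⁻¹)⁻¹ * P ∈ S.M
        have e : (P * s⁻¹)⁻¹ * P = s := by group
        rw [e]; exact hs.1
      have hey : leR S.M (P * s⁻¹) y := by
        show y * (P * s⁻¹)⁻¹ ∈ S.M
        have e : y * (P * s⁻¹)⁻¹ = (y * s) * P⁻¹ := by group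
        rw [e, ← hxys]
        exact hPx
      have hmuy : S.mu y ≤ n := by
        have := S.mu_lt_of_eq_mul' hyM hs.1 hs1 hxys
        omega
      have hq : y * (P * s⁻¹)⁻¹ ∈ parM S.M δ := ih y hy hmuy _ heδ hey
      have hPh : P * h⁻¹ ∈ DivR S.M δ := by
        have hm : P * h⁻¹ ∈ S.M := S.jn_left hcar h s
        apply S.divδ_of_leL_divδ hδ hm hPδ
        show (P * h⁻¹)⁻¹ * P ∈ S.M
        have e : (P * h⁻¹)⁻¹ * P = h := by group
        rw [e]; exact hh.1
      have e : x * h⁻¹ = (y * (P * s⁻¹)⁻¹) * (P * h⁻¹) := by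
        rw [hxys]; group
      rw [e]
      exact Submonoid.mul_mem _ hq (S.divδ_sub_parM hPh)

theorem Setting.quot_left (hcar : S.car = ⊤) : ∀ n : ℕ, ∀ x ∈ parM S.M δ, S.mu x ≤ n →
    ∀ h ∈ DivR S.M δ, leL S.M h x → h⁻¹ * x ∈ parM S.M δ := by
  intro n
  induction n with
  | zero =>
      intro x hx hmu h hh hhx
      have hx1 : x = 1 := by
        by_contra hc
        have := S.mu_pos (S.parM_le_M hx) hc
        omega
      subst hx1
      have h1 : h = 1 := S.eq_one_of_leL_one hh.1 hhx
      subst h1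
      simpa using Submonoid.one_mem _
  | succ n ih =>
      intro x hx hmu h hh hhx
      by_cases hx1 : x = 1
      · subst hx1
        have h1 : h = 1 := S.eq_one_of_leL_one hh.1 hhx
        subst h1
        simpa using Submonoid.one_mem _
      obtain ⟨s, hs, hs1, y, hy, hxys⟩ := S.parM_decomp_left hδ hx hx1
      have hyM : y ∈ S.M := S.parM_le_M hy
      have hsx : leL S.M s x := leL_of_eq_mul hyM hxys
      set P := S.ljn hcar h s with hP
      have hPx : leL S.M P x := S.ljn_le hcar hhx hsx
      have hPM : P ∈ S.M := S.ljn_mem hcar hh.1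
      have hPδ : P ∈ DivR S.M δ :=
        S.divδ_of_leL hδ hPM (S.ljn_le hcar (S.divδ_leL hδ hh) (S.divδ_leL hδ hs))
      have hsP : leL S.M s P := S.ljn_right hcar h s
      have heM : s⁻¹ * P ∈ S.M := hsP
      have heδ : s⁻¹ * P ∈ DivR S.M δ := by
        apply S.divδ_of_leR_divδ heM hPδ
        show P * (s⁻¹ * P)⁻¹ ∈ S.M
        have e : P * (s⁻¹ * P)⁻¹ = s := by group
        rw [e]; exact hs.1
      have hey : leL S.M (s⁻¹ * P) y := by
        show (s⁻¹ * P)⁻¹ * y ∈ S.M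
        have e : (s⁻¹ * P)⁻¹ * y = P⁻¹ * (s * y) := by group
        rw [e, ← hxys]
        exact hPx
      have hmuy : S.mu y ≤ n := by
        have := S.mu_lt_of_eq_mul hs.1 hyM hs1 hxys
        omega
      have hq : (s⁻¹ * P)⁻¹ * y ∈ parM S.M δ := ih y hy hmuy _ heδ hey
      have hPh : h⁻¹ * P ∈ DivR S.M δ := by
        have hm : h⁻¹ * P ∈ S.M := S.ljn_left hcar h s
        apply S.divδ_of_leR_divδ hm hPδ
        show P * (h⁻¹ * P)⁻¹ ∈ S.M
        have e : P * (h⁻¹ * P)⁻¹ = h := by group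
        rw [e]; exact hh.1
      have e : h⁻¹ * x = (h⁻¹ * P) * ((s⁻¹ * P)⁻¹ * y) := by
        rw [hxys]; group
      rw [e]
      exact Submonoid.mul_mem _ (S.divδ_sub_parM hPh) hq

theorem Setting.K_right (hcar : S.car = ⊤) : ∀ n : ℕ, ∀ d ∈ S.M, S.mu d ≤ n →
    ∀ x ∈ parM S.M δ, leR S.M d x → d ∈ parM S.M δ := by
  intro n
  induction n with
  | zero =>
      intro d hd hmu x hx hdx
      have hd1 : d = 1 := by
        by_contra hc
        have := S.mu_pos hd hc
        omega
      subst hd1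
      exact Submonoid.one_mem _
  | succ n ih =>
      intro d hd hmu x hx hdx
      by_cases hd1 : d = 1
      · subst hd1; exact Submonoid.one_mem _
      obtain ⟨d₂, hd₂, g, hg, hg1, hdg⟩ := S.M_decomp_right hd hd1
      have hgd : leR S.M g d := leR_of_eq_mul hd₂ hdg
      have hgx : leR S.M g x := leR_trans hgd hdx
      have hgδ : g ∈ DivR S.M δ :=
        S.K_simple hδ hcar (S.mu x) x hx le_rfl g hg hgx
      have hx₂ : x * g⁻¹ ∈ parM S.M δ :=
        S.quot_right hδ hcar (S.mu x) x hx le_rfl g hgδ hgx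
      have hd₂x₂ : leR S.M d₂ (x * g⁻¹) := by
        show x * g⁻¹ * d₂⁻¹ ∈ S.M
        have e : x * g⁻¹ * d₂⁻¹ = x * (d₂ * g)⁻¹ := by group
        rw [e, ← hdg]
        exact hdx
      have hmud₂ : S.mu d₂ ≤ n := by
        have := S.mu_lt_of_eq_mul' hd₂ hg.1 hg1 hdg
        omega
      have := ih d₂ hd₂ hmud₂ (x * g⁻¹) hx₂ hd₂x₂
      rw [hdg]
      exact Submonoid.mul_mem _ this (S.divδ_sub_parM hgδ)

theorem Setting.K_left (hcar : S.car = ⊤) : ∀ n : ℕ, ∀ d ∈ S.M, S.mu d ≤ n →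
    ∀ x ∈ parM S.M δ, leL S.M d x → d ∈ parM S.M δ := by
  intro n
  induction n with
  | zero =>
      intro d hd hmu x hx hdx
      have hd1 : d = 1 := by
        by_contra hc
        have := S.mu_pos hd hc
        omega
      subst hd1
      exact Submonoid.one_mem _
  | succ n ih =>
      intro d hd hmu x hx hdx
      by_cases hd1 : d = 1
      · subst hd1; exact Submonoid.one_mem _
      obtain ⟨g, hg, hg1, d₂, hd₂, hdg⟩ := S.M_decomp_left hd hd1
      have hgd : leL S.M g d := leL_of_eq_mul hd₂ hdg
      have hgx : leL S.M g x := leL_trans hgd hdx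
      have hgδ : g ∈ DivR S.M δ :=
        S.K_simple_left hδ hcar (S.mu x) x hx le_rfl g hg hgx
      have hx₂ : g⁻¹ * x ∈ parM S.M δ :=
        S.quot_left hδ hcar (S.mu x) x hx le_rfl g hgδ hgx
      have hd₂x₂ : leL S.M d₂ (g⁻¹ * x) := by
        show d₂⁻¹ * (g⁻¹ * x) ∈ S.M
        have e : d₂⁻¹ * (g⁻¹ * x) = (g * d₂)⁻¹ * x := by group
        rw [e, ← hdg]
        exact hdx
      have hmud₂ : S.mu d₂ ≤ n := by
        have := S.mu_lt_of_eq_mul hg.1 hd₂ hg1 hdg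
        omega
      have := ih d₂ hd₂ hmud₂ (g⁻¹ * x) hx₂ hd₂x₂
      rw [hdg]
      exact Submonoid.mul_mem _ (S.divδ_sub_parM hgδ) this

/-- main closure theorem, right divisors -/
theorem Setting.K_divR (hcar : S.car = ⊤) {x d : G} (hx : x ∈ parM S.M δ)
    (hd : d ∈ S.M) (hdx : leR S.M d x) : d ∈ parM S.M δ :=
  S.K_right hδ hcar (S.mu d) d hd le_rfl x hx hdx

theorem Setting.K_divL (hcar : S.car = ⊤) {x d : G} (hx : x ∈ parM S.M δ)
    (hd : d ∈ S.M) (hdx : leL S.M d x) : d ∈ parM S.M δ :=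
  S.K_left hδ hcar (S.mu d) d hd le_rfl x hx hdx

theorem Setting.parM_jn (hcar : S.car = ⊤) {x y : G} (hx : x ∈ parM S.M δ)
    (hy : y ∈ parM S.M δ) : S.jn hcar x y ∈ parM S.M δ := by
  obtain ⟨mx, hmx⟩ := S.parM_leR_pow' hδ hx
  obtain ⟨my, hmy⟩ := S.parM_leR_pow' hδ hy
  have hδM : δ ∈ S.M := hδ.mem
  have h1 : leR S.M x (δ ^ (mx + my)) :=
    leR_trans hmx (S.pow_leR_pow hδM (by omega))
  have h2 : leR S.M y (δ ^ (mx + my)) :=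
    leR_trans hmy (S.pow_leR_pow hδM (by omega))
  exact S.K_divR hδ hcar (Submonoid.pow_mem _ (S.delta_mem_parM hδ) (mx + my))
    (S.jn_mem hcar (S.parM_le_M hx)) (S.jn_le hcar h1 h2)

theorem Setting.parM_quot_of_leR (hcar : S.car = ⊤) {x y : G} (hx : x ∈ parM S.M δ)
    (hy : y ∈ S.M) (h : leR S.M y x) : x * y⁻¹ ∈ parM S.M δ := by
  apply S.K_divL hδ hcar hx h
  show (x * y⁻¹)⁻¹ * x ∈ S.M
  have e : (x * y⁻¹)⁻¹ * x = y := by group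
  rw [e]; exact hy

theorem Setting.parM_quot_of_leL (hcar : S.car = ⊤) {x y : G} (hx : x ∈ parM S.M δ)
    (hy : y ∈ S.M) (h : leL S.M y x) : y⁻¹ * x ∈ parM S.M δ := by
  apply S.K_divR hδ hcar hx h
  show x * (y⁻¹ * x)⁻¹ ∈ S.M
  have e : x * (y⁻¹ * x)⁻¹ = y := by group
  rw [e]; exact hy

theorem Setting.parM_unmovable (hcar : S.car = ⊤) (hne : parM S.M δ ≠ S.M) {x : G}
    (hx : x ∈ parM S.M δ) : Unmovable S.M S.Δ x := by
  refine ⟨S.parM_le_M hx, fun hΔx => ?_⟩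
  have hΔpar : S.Δ ∈ parM S.M δ :=
    S.K_divR hδ hcar hx S.garside.delta_mem hΔx
  apply hne
  apply le_antisymm (S.parM_le_M)
  conv_lhs => rw [← S.garside.div_gen_monoid]
  apply Submonoid.closure_le.2
  intro g hg
  exact S.K_divR hδ hcar hΔpar hg.1 hg.2

end Klemmas

end GarsideOrder
namespace GarsideOrder

section Tails
variable {G : Type*} [Group G] (S : Setting G)

theorem Setting.exists_maxdiv {δ : G} (hδ : IsParabolic S.M S.Δ δ) (hcar : S.car = ⊤)
    {a : G} (ha : a ∈ S.M) :
    ∃ b, b ∈ parM S.M δ ∧ leR S.M b a ∧ ∀ c ∈ parM S.M δ, leR S.M c a → leR S.M c b := by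
  set D : Set G := {c | c ∈ parM S.M δ ∧ leR S.M c a} with hD
  have h1D : (1 : G) ∈ D := ⟨Submonoid.one_mem _, by rw [leR_one_iff]; exact ha⟩
  have hbdd : BddAbove (S.mu '' D) := by
    refine ⟨S.mu a, ?_⟩
    rintro n ⟨c, hc, rfl⟩
    exact S.mu_le_of_leR ha (S.parM_le_M hc.1) hc.2
  have hne : (S.mu '' D).Nonempty := ⟨S.mu 1, 1, h1D, rfl⟩
  obtain ⟨b, hbD, hbmu⟩ := Nat.sSup_mem hne hbdd
  refine ⟨b, hbD.1, hbD.2, ?_⟩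
  intro c hc hca
  set j := S.jn hcar c b with hj
  have hjpar : j ∈ parM S.M δ := S.parM_jn hδ hcar hc hbD.1
  have hja : leR S.M j a := S.jn_le hcar hca hbD.2
  have hjD : j ∈ D := ⟨hjpar, hja⟩
  have hmuj : S.mu j ≤ S.mu b := by
    rw [hbmu]
    exact le_csSup hbdd ⟨j, hjD, rfl⟩
  have hjb : j = b := by
    by_contra hne'
    have := S.mu_lt_of_leR (S.parM_le_M hjpar) (S.parM_le_M hbD.1)
      (S.jn_right hcar c b) (Ne.symm hne')
    omega
  rw [← hjb]
  exact S.jn_left hcar c b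

theorem Setting.tail_spec_parab (hcar : S.car = ⊤) {δ : G} (hδ : IsParabolic S.M S.Δ δ)
    {a : G} (ha : a ∈ S.M) :
    tail S.M (parM S.M δ) a ∈ parM S.M δ ∧ leR S.M (tail S.M (parM S.M δ) a) a ∧
      ∀ c ∈ parM S.M δ, leR S.M c a → leR S.M c (tail S.M (parM S.M δ) a) := by
  obtain ⟨b, hbpar, hba, hbmax⟩ := S.exists_maxdiv hδ hcar ha
  have hcond : ∃ b' : G, b' ∈ parM S.M δ ∧
      {c : G | c ∈ parM S.M δ ∧ leR S.M c a}
        = {c : G | c ∈ parM S.M δ ∧ leR S.M c b'} := by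
    refine ⟨b, hbpar, ?_⟩
    ext c
    simp only [Set.mem_setOf_eq]
    constructor
    · rintro ⟨h1, h2⟩; exact ⟨h1, hbmax c h1 h2⟩
    · rintro ⟨h1, h2⟩; exact ⟨h1, leR_trans h2 hba⟩
  have htl : tail S.M (parM S.M δ) a = hcond.choose := by
    rw [tail, dif_pos hcond]
  obtain ⟨hch1, hch2⟩ := hcond.choose_spec
  have hbin : b ∈ {c : G | c ∈ parM S.M δ ∧ leR S.M c a} := ⟨hbpar, hba⟩
  rw [hch2] at hbin
  have hchin : hcond.choose ∈ {c : G | c ∈ parM S.M δ ∧ leR S.M c hcond.choose} :=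
    ⟨hch1, leR_refl _ _⟩
  rw [← hch2] at hchin
  have heq : hcond.choose = b := S.M_antisymm (hbmax _ hch1 hchin.2) hbin.2
  rw [htl, heq]
  exact ⟨hbpar, hba, hbmax⟩

/-- the two parabolic submonoids appearing in `strip` -/
theorem Setting.tail_spec (hcar : S.car = ⊤) (N' : Submonoid G)
    (hN' : N' = S.M₁ ∨ N' = S.Nsub) {a : G} (ha : a ∈ S.M) :
    tail S.M N' a ∈ N' ∧ leR S.M (tail S.M N' a) a ∧
      ∀ c ∈ N', leR S.M c a → leR S.M c (tail S.M N' a) := by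
  rcases hN' with h | h <;> subst h
  · exact S.tail_spec_parab hcar S.par1 ha
  · exact S.tail_spec_parab hcar S.parH ha

theorem Setting.tail_eq (hcar : S.car = ⊤) (N' : Submonoid G)
    (hN' : N' = S.M₁ ∨ N' = S.Nsub) {a b : G} (ha : a ∈ S.M)
    (hb : b ∈ N') (hba : leR S.M b a)
    (hmax : ∀ c ∈ N', leR S.M c a → leR S.M c b) :
    tail S.M N' a = b := by
  obtain ⟨h1, h2, h3⟩ := S.tail_spec hcar N' hN' ha
  exact S.M_antisymm (hmax _ h1 h2) (h3 b hb hba)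

theorem Setting.tail_mem_M (hcar : S.car = ⊤) (N' : Submonoid G)
    (hN' : N' = S.M₁ ∨ N' = S.Nsub) {a : G} (ha : a ∈ S.M) :
    tail S.M N' a ∈ S.M := by
  have h := (S.tail_spec hcar N' hN' ha).1
  rcases hN' with hh | hh <;> subst hh
  · exact S.M1_le_M h
  · exact S.N_le_M h

theorem Setting.tail_of_mem (hcar : S.car = ⊤) (N' : Submonoid G)
    (hN' : N' = S.M₁ ∨ N' = S.Nsub) {a : G} (ha : a ∈ N') :
    tail S.M N' a = a := by
  have haM : a ∈ S.M := by
    rcases hN' with hh | hh <;> subst hh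
    · exact S.M1_le_M ha
    · exact S.N_le_M ha
  exact S.tail_eq hcar N' hN' haM ha (leR_refl _ _) (fun c _ hc => hc)

theorem Setting.tail_one (hcar : S.car = ⊤) (N' : Submonoid G)
    (hN' : N' = S.M₁ ∨ N' = S.Nsub) : tail S.M N' (1 : G) = 1 :=
  S.tail_of_mem hcar N' hN' (Submonoid.one_mem _)

theorem Setting.tail_ne_one (hcar : S.car = ⊤) (N' : Submonoid G)
    (hN' : N' = S.M₁ ∨ N' = S.Nsub) {a c : G} (ha : a ∈ S.M)
    (hc : c ∈ N') (hc1 : c ≠ 1) (hca : leR S.M c a) : tail S.M N' a ≠ 1 := by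
  intro h
  have := (S.tail_spec hcar N' hN' ha).2.2 c hc hca
  rw [h] at this
  exact hc1 (S.eq_one_of_leR_one (by
    rcases hN' with hh | hh <;> subst hh
    · exact S.M1_le_M hc
    · exact S.N_le_M hc) this)

/-- after stripping the tail, the new tail (in the same parabolic) is trivial -/
theorem Setting.tail_strip_eq_one (hcar : S.car = ⊤) (N' : Submonoid G)
    (hN' : N' = S.M₁ ∨ N' = S.Nsub) {a : G} (ha : a ∈ S.M) :
    tail S.M N' (a * (tail S.M N' a)⁻¹) = 1 := by
  obtain ⟨h1, h2, h3⟩ := S.tail_spec hcar N' hN' ha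
  set τ := tail S.M N' a with hτ
  have hmem : a * τ⁻¹ ∈ S.M := h2
  apply S.tail_eq hcar N' hN' hmem (Submonoid.one_mem _)
    (by rw [leR_one_iff]; exact hmem)
  intro c hc hcaτ
  have hcτa : leR S.M (c * τ) a := by
    show a * (c * τ)⁻¹ ∈ S.M
    have e : a * (c * τ)⁻¹ = (a * τ⁻¹) * c⁻¹ := by group
    rw [e]
    exact hcaτ
  have hcτN : c * τ ∈ N' := Submonoid.mul_mem _ hc h1
  have := h3 _ hcτN hcτa
  -- c * τ ≤_R τ  ⇒  τ * (c*τ)⁻¹ = c⁻¹ ∈ M ⇒ c = 1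
  have hcinv : c⁻¹ ∈ S.M := by
    have e : τ * (c * τ)⁻¹ = c⁻¹ := by group
    rw [← e]
    exact this
  have hcM : c ∈ S.M := by
    rcases hN' with hh | hh <;> subst hh
    · exact S.M1_le_M hc
    · exact S.N_le_M hc
  have : c = 1 := S.garside.units_trivial c hcM hcinv
  rw [this, leR_one_iff]
  exact Submonoid.one_mem _

end Tails

end GarsideOrder
namespace GarsideOrder

section Strip
variable {G : Type*} [Group G] (S : Setting G)

theorem Setting.if_par (i : ℕ) :
    (if i % 2 = 0 then S.M₁ else S.Nsub) = S.M₁ ∨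
      (if i % 2 = 0 then S.M₁ else S.Nsub) = S.Nsub := by
  by_cases h : i % 2 = 0 <;> simp [h]

theorem Setting.strip_mem (hcar : S.car = ⊤) {a : G} (ha : a ∈ S.M) :
    ∀ i, strip S.M S.M₁ S.Nsub i a ∈ S.M := by
  intro i
  induction i with
  | zero => exact ha
  | succ n ih =>
      show strip S.M S.M₁ S.Nsub n a *
        (tail S.M (if n % 2 = 0 then S.M₁ else S.Nsub) (strip S.M S.M₁ S.Nsub n a))⁻¹ ∈ S.M
      exact (S.tail_spec hcar _ (S.if_par n) ih).2.1

theorem Setting.strip_shift (a : G) :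
    ∀ i, strip S.M S.M₁ S.Nsub (i + 2) a
      = strip S.M S.M₁ S.Nsub i (strip S.M S.M₁ S.Nsub 2 a) := by
  intro i
  induction i with
  | zero => rfl
  | succ n ih =>
      have hmod : (n + 2) % 2 = n % 2 := Nat.add_mod_right n 2
      show strip S.M S.M₁ S.Nsub (n + 2) a *
          (tail S.M (if (n + 2) % 2 = 0 then S.M₁ else S.Nsub)
            (strip S.M S.M₁ S.Nsub (n + 2) a))⁻¹ = _
      rw [ih, hmod]
      rfl

theorem Setting.strip_one_eq (a : G) :
    strip S.M S.M₁ S.Nsub 1 a = a * (tail S.M S.M₁ a)⁻¹ := rfl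

theorem Setting.strip_two_eq (a : G) :
    strip S.M S.M₁ S.Nsub 2 a
      = a * (tail S.M S.M₁ a)⁻¹
          * (tail S.M S.Nsub (a * (tail S.M S.M₁ a)⁻¹))⁻¹ := rfl

theorem Setting.union_list_letter : ∀ l : List G,
    (∀ y ∈ l, y ∈ (S.Nsub : Set G) ∪ (S.M₁ : Set G)) → l.prod ≠ 1 →
    ∃ g, (g ∈ S.M₁ ∨ g ∈ S.Nsub) ∧ g ≠ 1 ∧ leR S.M g l.prod := by
  intro l
  induction l using List.reverseRecOn with
  | nil => intro _ h; simp at h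
  | append_singleton l' s ih =>
      intro hl hne
      rw [List.prod_append, List.prod_singleton] at hne ⊢
      by_cases h1 : s = 1
      · subst h1
        rw [mul_one] at hne ⊢
        exact ih (fun y hy => hl y (by simp [hy])) hne
      · have hs := hl s (by simp)
        have hl'M : l'.prod ∈ S.M := by
          apply Submonoid.list_prod_mem
          intro y hy
          rcases hl y (by simp [hy]) with h | h
          · exact S.N_le_M h
          · exact S.M1_le_M h
        refine ⟨s, ?_, h1, leR_mul_left hl'M⟩
        rcases hs with h | h
        · exact Or.inr h
        · exact Or.inl h

theorem Setting.exists_letter {a : G} (ha : a ∈ S.M) (hne : a ≠ 1) :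
    ∃ g, (g ∈ S.M₁ ∨ g ∈ S.Nsub) ∧ g ≠ 1 ∧ leR S.M g a := by
  have ha' : a ∈ Submonoid.closure ((parM S.M S.lam : Set G) ∪ (parM S.M S.δ1 : Set G)) := by
    rw [S.unionGen]
    exact ha
  obtain ⟨l, hl, hprod⟩ := Submonoid.exists_list_of_mem_closure ha'
  rw [← hprod]
  exact S.union_list_letter l hl (by rw [hprod]; exact hne)

theorem Setting.strip_reaches_one (hcar : S.car = ⊤) : ∀ n : ℕ, ∀ a ∈ S.M, S.mu a ≤ n →
    ∃ p, 1 ≤ p ∧ strip S.M S.M₁ S.Nsub p a = 1 := by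
  have hbase : strip S.M S.M₁ S.Nsub 1 (1 : G) = 1 := by
    rw [S.strip_one_eq, S.tail_one hcar S.M₁ (Or.inl rfl)]
    simp
  intro n
  induction n with
  | zero =>
      intro a ha hmu
      have ha1 : a = 1 := by
        by_contra h
        have := S.mu_pos ha h
        omega
      subst ha1
      exact ⟨1, le_rfl, hbase⟩
  | succ n ih =>
      intro a ha hmu
      by_cases ha1 : a = 1
      · subst ha1; exact ⟨1, le_rfl, hbase⟩
      set τ₁ := tail S.M S.M₁ a with hτ₁def
      obtain ⟨hτ₁N, hτ₁le, _⟩ := S.tail_spec hcar S.M₁ (Or.inl rfl) ha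
      set b := a * τ₁⁻¹ with hbdef
      have hb : b ∈ S.M := hτ₁le
      set τ₂ := tail S.M S.Nsub b with hτ₂def
      obtain ⟨hτ₂N, hτ₂le, _⟩ := S.tail_spec hcar S.Nsub (Or.inr rfl) hb
      set c := b * τ₂⁻¹ with hcdef
      have hc : c ∈ S.M := hτ₂le
      have hstrip2 : strip S.M S.M₁ S.Nsub 2 a = c := rfl
      by_cases hτ : τ₂ * τ₁ = 1
      · exfalso
        have hτ₁1 : τ₁ = 1 :=
          S.mul_eq_one_right (S.N_le_M hτ₂N) (S.M1_le_M hτ₁N) hτ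
        have hτ₂1 : τ₂ = 1 :=
          S.mul_eq_one_left (S.N_le_M hτ₂N) (S.M1_le_M hτ₁N) hτ
        have hba : b = a := by rw [hbdef, hτ₁1]; simp
        obtain ⟨g, hg, hg1, hga⟩ := S.exists_letter ha ha1
        rcases hg with hgM1 | hgN
        · exact S.tail_ne_one hcar S.M₁ (Or.inl rfl) ha hgM1 hg1 hga hτ₁1
        · refine S.tail_ne_one hcar S.Nsub (Or.inr rfl) hb hgN hg1 ?_ hτ₂1
          rw [hba]
          exact hga
      · have hac : a = c * (τ₂ * τ₁) := by
          rw [hcdef, hbdef]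
          group
        have hmuc : S.mu c < S.mu a :=
          S.mu_lt_of_eq_mul' hc
            (S.M.mul_mem (S.N_le_M hτ₂N) (S.M1_le_M hτ₁N)) hτ hac
        obtain ⟨q, hq1, hq⟩ := ih c hc (by omega)
        refine ⟨q + 2, by omega, ?_⟩
        rw [S.strip_shift a q, hstrip2, hq]

theorem Setting.bh_spec (hcar : S.car = ⊤) {a : G} (ha : a ∈ S.M) :
    1 ≤ bh S.M S.M₁ S.Nsub a ∧
      strip S.M S.M₁ S.Nsub (bh S.M S.M₁ S.Nsub a) a = 1 := by
  have hne : {p : ℕ | 1 ≤ p ∧ strip S.M S.M₁ S.Nsub p a = 1}.Nonempty := by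
    obtain ⟨p, h1, h2⟩ := S.strip_reaches_one hcar (S.mu a) a ha le_rfl
    exact ⟨p, h1, h2⟩
  exact Nat.sInf_mem hne

theorem Setting.mem_M1_of_dpt_eq_zero (hcar : S.car = ⊤) {a : G} (ha : a ∈ S.M)
    (h : dpt S.M S.M₁ S.Nsub a = 0) : a ∈ S.M₁ := by
  obtain ⟨h1, h2⟩ := S.bh_spec hcar ha
  have hbh : bh S.M S.M₁ S.Nsub a = 1 := by
    have : bh S.M S.M₁ S.Nsub a / 2 = 0 := h
    omega
  rw [hbh] at h2
  rw [S.strip_one_eq] at h2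
  have : a = tail S.M S.M₁ a := by
    have := mul_inv_eq_one.1 h2
    exact this
  rw [this]
  exact (S.tail_spec hcar S.M₁ (Or.inl rfl) ha).1

theorem Setting.dpt_of_mem_M1 (hcar : S.car = ⊤) {a : G} (ha : a ∈ S.M₁) :
    dpt S.M S.M₁ S.Nsub a = 0 := by
  have hstrip1 : strip S.M S.M₁ S.Nsub 1 a = 1 := by
    rw [S.strip_one_eq, S.tail_of_mem hcar S.M₁ (Or.inl rfl) ha]
    simp
  have hle : bh S.M S.M₁ S.Nsub a ≤ 1 :=
    Nat.sInf_le ⟨le_rfl, hstrip1⟩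
  show bh S.M S.M₁ S.Nsub a / 2 = 0
  omega

end Strip

end GarsideOrder
namespace GarsideOrder

section Echain
variable {G : Type*} [Group G] (S : Setting G)

/-- coprime cancellation: if `y` right-divides `Δ^m · u` for a simple `u` with
`y ∧ u = 1`, then `y` right-divides `Δ^m`. -/
theorem Setting.claimU (hcar : S.car = ⊤) : ∀ k : ℕ, ∀ u ∈ DivR S.M S.Δ, S.mu u ≤ k →
    ∀ m : ℕ, ∀ y ∈ S.M, leR S.M y (S.Δ ^ m * u) → S.mt hcar y u = 1 →
    leR S.M y (S.Δ ^ m) := by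
  intro k
  induction k with
  | zero =>
      intro u hu hmu m y hy hyd hcop
      have hu1 : u = 1 := by
        by_contra h
        have := S.mu_pos hu.1 h
        omega
      subst hu1
      simpa using hyd
  | succ k ih =>
      intro u hu hmu m y hy hyd hcop
      by_cases hu1 : u = 1
      · subst hu1; simpa using hyd
      set P := S.jn hcar y (S.Δ ^ m) with hPdef
      have hΔm : leR S.M (S.Δ ^ m) (S.Δ ^ m * u) := by
        show S.Δ ^ m * u * (S.Δ ^ m)⁻¹ ∈ S.M
        have e : S.Δ ^ m * u * (S.Δ ^ m)⁻¹ = u := by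
          rw [S.delta_pow_comm hcar m u]
          group
        rw [e]; exact hu.1
      have hP : leR S.M P (S.Δ ^ m * u) := S.jn_le hcar hyd hΔm
      have heM : P * (S.Δ ^ m)⁻¹ ∈ S.M := S.jn_right hcar y (S.Δ ^ m)
      set e := P * (S.Δ ^ m)⁻¹ with hedef
      have hue : leR S.M e u := by
        show u * e⁻¹ ∈ S.M
        have hcomm := S.delta_pow_comm hcar m
        have eq1 : u * e⁻¹ = u * S.Δ ^ m * P⁻¹ := by rw [hedef]; group
        have eq2 : u * S.Δ ^ m = S.Δ ^ m * u := (hcomm u).symm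
        rw [eq1, eq2]
        exact hP
      by_cases heu : e = u
      · -- P = y ∨ Δ^m = u Δ^m; but Δ^m * y is also an upper bound, forcing u ≤ y
        have hyZ : leR S.M y (S.Δ ^ m * y) := leR_mul_left (Submonoid.pow_mem _ S.garside.delta_mem m)
        have hΔZ : leR S.M (S.Δ ^ m) (S.Δ ^ m * y) := by
          show S.Δ ^ m * y * (S.Δ ^ m)⁻¹ ∈ S.M
          have e2 : S.Δ ^ m * y * (S.Δ ^ m)⁻¹ = y := by
            rw [S.delta_pow_comm hcar m y]; group
          rw [e2]; exact hy
        have hPZ : leR S.M P (S.Δ ^ m * y) := S.jn_le hcar hyZ hΔZ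
        have huy : leR S.M u y := by
          show y * u⁻¹ ∈ S.M
          have e3 : y * u⁻¹ = S.Δ ^ m * y * ((S.Δ ^ m) * u)⁻¹ := by
            rw [S.delta_pow_comm hcar m y, S.delta_pow_comm hcar m u]
            group
          have e4 : P = u * S.Δ ^ m := by
            rw [← heu, hedef]; group
          have e5 : u * S.Δ ^ m = S.Δ ^ m * u := (S.delta_pow_comm hcar m u).symm
          rw [e3, ← e5, ← e4]
          exact hPZ
        exfalso
        apply hu1
        apply S.eq_one_of_leR_one hu.1
        rw [← hcop]
        exact S.le_mt hcar huy (leR_refl _ _)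
      · have heΔ : e ∈ DivR S.M S.Δ := S.divΔ_of_leR_divΔ' heM hu hue
        have hmue : S.mu e ≤ k := by
          have := S.mu_lt_of_leR hu.1 heM hue heu
          omega
        have hyP : leR S.M y (S.Δ ^ m * e) := by
          have e6 : S.Δ ^ m * e = P := by
            rw [hedef, S.delta_pow_comm hcar m (P * (S.Δ ^ m)⁻¹)]
            group
          rw [e6]
          exact S.jn_left hcar y (S.Δ ^ m)
        have hcop' : S.mt hcar y e = 1 := by
          apply S.eq_one_of_leR_one (S.mt_mem hcar hy heM)
          rw [← hcop]
          exact S.le_mt hcar (S.mt_left hcar y e)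
            (leR_trans (S.mt_right hcar y e) hue)
        exact ih e heΔ hmue m y hy hyP hcop'

/-- head extraction: `x ≤ Δ^{m+1}` implies `x / (x ∧ Δ) ≤ Δ^m`. -/
theorem Setting.headC (hcar : S.car = ⊤) {x : G} (hx : x ∈ S.M) {m : ℕ}
    (h : leR S.M x (S.Δ ^ (m + 1))) :
    leR S.M (x * (S.mt hcar x S.Δ)⁻¹) (S.Δ ^ m) := by
  set P := S.jn hcar x (S.Δ ^ m) with hPdef
  have hP : leR S.M P (S.Δ ^ (m + 1)) :=
    S.jn_le hcar h (S.pow_leR_pow S.garside.delta_mem (by omega))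
  set e := P * (S.Δ ^ m)⁻¹ with hedef
  have heM : e ∈ S.M := S.jn_right hcar x (S.Δ ^ m)
  have heΔ : e ∈ DivR S.M S.Δ := by
    refine ⟨heM, ?_⟩
    show S.Δ * e⁻¹ ∈ S.M
    have e1 : S.Δ * e⁻¹ = S.Δ ^ (m + 1) * P⁻¹ := by
      rw [hedef, pow_succ]
      group
    rw [e1]
    exact hP
  set σ := S.mt hcar x e with hσdef
  have hσx : leR S.M σ x := S.mt_left hcar x e
  have hσe : leR S.M σ e := S.mt_right hcar x e
  set u := e * σ⁻¹ with hudef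
  have huM : u ∈ S.M := hσe
  have huΔ : u ∈ DivR S.M S.Δ := by
    apply S.divΔ_of_leL huM
    apply leL_trans _ (S.divΔ_leL heΔ)
    show u⁻¹ * e ∈ S.M
    have e2 : u⁻¹ * e = σ := by rw [hudef]; group
    rw [e2]
    exact S.mt_mem hcar hx heM
  set x' := x * σ⁻¹ with hx'def
  have hx'M : x' ∈ S.M := hσx
  have hx'div : leR S.M x' (S.Δ ^ m * u) := by
    show S.Δ ^ m * u * x'⁻¹ ∈ S.M
    have e3 : S.Δ ^ m * u * x'⁻¹ = (S.Δ ^ m * e) * x⁻¹ := by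
      rw [hudef, hx'def]; group
    have e4 : S.Δ ^ m * e = P := by
      rw [hedef, S.delta_pow_comm hcar m (P * (S.Δ ^ m)⁻¹)]
      group
    rw [e3, e4]
    exact S.jn_left hcar x (S.Δ ^ m)
  have hcop : S.mt hcar x' u = 1 := by
    rw [hx'def, hudef, S.mt_translate hcar x e σ⁻¹, ← hσdef]
    group
  have hx'Δm : leR S.M x' (S.Δ ^ m) :=
    S.claimU hcar (S.mu u) u huΔ le_rfl m x' hx'M hx'div hcop
  -- conclude
  have hσh : leR S.M σ (S.mt hcar x S.Δ) :=
    S.le_mt hcar hσx (leR_trans hσe heΔ.2)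
  show S.Δ ^ m * (x * (S.mt hcar x S.Δ)⁻¹)⁻¹ ∈ S.M
  have e5 : S.Δ ^ m * (x * (S.mt hcar x S.Δ)⁻¹)⁻¹
      = (S.mt hcar x S.Δ * σ⁻¹) * (S.Δ ^ m * x'⁻¹) := by
    have hcm := S.delta_pow_comm hcar m (S.mt hcar x S.Δ * σ⁻¹)
    symm
    calc (S.mt hcar x S.Δ * σ⁻¹) * (S.Δ ^ m * x'⁻¹)
        = (S.mt hcar x S.Δ * σ⁻¹ * S.Δ ^ m) * x'⁻¹ := by group
      _ = (S.Δ ^ m * (S.mt hcar x S.Δ * σ⁻¹)) * x'⁻¹ := by rw [hcm]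
      _ = S.Δ ^ m * (x * (S.mt hcar x S.Δ)⁻¹)⁻¹ := by rw [hx'def]; group
  rw [e5]
  exact S.M.mul_mem hσh hx'Δm

/-- power division property: an element of `M₁` dividing `Δ^k` divides `δ₁^k`. -/
theorem Setting.PDE (hcar : S.car = ⊤) : ∀ n : ℕ, ∀ x ∈ S.M₁, S.mu x ≤ n →
    ∀ k : ℕ, leR S.M x (S.Δ ^ k) → leR S.M x (S.δ1 ^ k) := by
  intro n
  induction n with
  | zero =>
      intro x hx hmu k hdx
      have hx1 : x = 1 := by
        by_contra h
        have := S.mu_pos (S.M1_le_M hx) h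
        omega
      subst hx1
      rw [leR_one_iff]
      exact Submonoid.pow_mem _ S.par1.mem k
  | succ n ih =>
      intro x hx hmu k hdx
      by_cases hx1 : x = 1
      · subst hx1
        rw [leR_one_iff]
        exact Submonoid.pow_mem _ S.par1.mem k
      have hxM : x ∈ S.M := S.M1_le_M hx
      rcases k with _ | k'
      · exfalso
        exact hx1 (S.eq_one_of_leR_one hxM (by simpa using hdx))
      set h := S.mt hcar x S.Δ with hhdef
      have hhx : leR S.M h x := S.mt_left hcar x S.Δ
      have hhΔ : leR S.M h S.Δ := S.mt_right hcar x S.Δ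
      have hhM : h ∈ S.M := S.mt_mem hcar hxM S.garside.delta_mem
      have hh1 : h ≠ 1 := by
        obtain ⟨y, hy, g, hg, hg1, hxyg⟩ := S.M_decomp_right hxM hx1
        intro hcon
        apply hg1
        apply S.eq_one_of_leR_one hg.1
        rw [← hcon]
        exact S.le_mt hcar (leR_of_eq_mul hy hxyg) hg.2
      have hhM1 : h ∈ S.M₁ := S.K_divR S.par1 hcar hx hhM hhx
      have hhδ1 : h ∈ DivR S.M S.δ1 := by
        rw [S.par1.div_eq]
        exact ⟨⟨hhM, hhΔ⟩, hhM1⟩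
      set x₂ := x * h⁻¹ with hx₂def
      have hx₂M1 : x₂ ∈ S.M₁ := S.parM_quot_of_leR S.par1 hcar hx hhM hhx
      have hx₂Δ : leR S.M x₂ (S.Δ ^ k') := S.headC hcar hxM hdx
      have hmux₂ : S.mu x₂ ≤ n := by
        have heq : x = x₂ * h := by rw [hx₂def]; group
        have := S.mu_lt_of_eq_mul' (S.M1_le_M hx₂M1) hhM hh1 heq
        omega
      have hx₂δ : leR S.M x₂ (S.δ1 ^ k') := ih x₂ hx₂M1 hmux₂ k' hx₂Δ
      show S.δ1 ^ (k' + 1) * x⁻¹ ∈ S.M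
      have hcompl : S.δ1 * h⁻¹ ∈ DivR S.M S.δ1 := S.compl_left_divδ S.par1 hhδ1
      have hconj : S.δ1 ^ k' * (S.δ1 * h⁻¹) * (S.δ1 ^ k')⁻¹ ∈ parM S.M S.δ1 :=
        S.conj_pow_parM S.par1 (S.divδ_sub_parM hcompl) k'
      have e6 : S.δ1 ^ (k' + 1) * x⁻¹
          = (S.δ1 ^ k' * (S.δ1 * h⁻¹) * (S.δ1 ^ k')⁻¹) * (S.δ1 ^ k' * x₂⁻¹) := by
        rw [hx₂def, pow_succ]
        group
      rw [e6]
      exact S.M.mul_mem (S.parM_le_M hconj) hx₂δ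

/-- no nontrivial element of `M₁` right-divides a power of `θ`. -/
theorem Setting.M1_coprime_theta (hcar : S.car = ⊤) {w : G} (hw : w ∈ S.M₁) {k : ℕ}
    (h : leR S.M w (S.theta ^ k)) : w = 1 := by
  have hwG1 : w ∈ S.G₁ := S.M1_le_G1 hw
  have hv : S.δ1 ^ k * w ∈ S.M₁ :=
    Submonoid.mul_mem _ (Submonoid.pow_mem _ S.delta1_mem_M1 k) hw
  have hvΔ : leR S.M (S.δ1 ^ k * w) (S.Δ ^ k) := by
    show S.Δ ^ k * (S.δ1 ^ k * w)⁻¹ ∈ S.M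
    have e1 : S.Δ ^ k * (S.δ1 ^ k * w)⁻¹
        = S.theta ^ k * (S.δ1 ^ k * w⁻¹ * (S.δ1 ^ k)⁻¹) := by
      rw [← S.theta_pow_mul_delta1_pow hcar k]
      group
    have e2 : S.δ1 ^ k * w⁻¹ * (S.δ1 ^ k)⁻¹ = w⁻¹ := by
      have := S.delta1_pow_comm (Subgroup.inv_mem _ hwG1) k
      rw [this]
      group
    rw [e1, e2]
    exact h
  have hvδ : leR S.M (S.δ1 ^ k * w) (S.δ1 ^ k) :=
    S.PDE hcar (S.mu (S.δ1 ^ k * w)) _ hv le_rfl k hvΔ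
  have hwinv : w⁻¹ ∈ S.M := by
    have hmem : S.δ1 ^ k * (S.δ1 ^ k * w)⁻¹ ∈ S.M := hvδ
    have hc : S.δ1 ^ k * w⁻¹ = w⁻¹ * S.δ1 ^ k :=
      S.delta1_pow_comm (Subgroup.inv_mem _ hwG1) k
    have e3 : S.δ1 ^ k * (S.δ1 ^ k * w)⁻¹ = S.δ1 ^ k * w⁻¹ * (S.δ1 ^ k)⁻¹ := by
      group
    rw [e3, hc] at hmem
    have e4 : w⁻¹ * S.δ1 ^ k * (S.δ1 ^ k)⁻¹ = w⁻¹ := by group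
    rwa [e4] at hmem
  exact S.garside.units_trivial w (S.M1_le_M hw) hwinv

end Echain

end GarsideOrder
namespace GarsideOrder

section ThetaMachine
variable {G : Type*} [Group G] (S : Setting G)

theorem Setting.tail_mul_M1 (hcar : S.car = ⊤) {x y : G} (hx : x ∈ S.M) (hy : y ∈ S.M₁) :
    tail S.M S.M₁ (x * y) = tail S.M S.M₁ x * y := by
  obtain ⟨ht1, ht2, ht3⟩ := S.tail_spec hcar S.M₁ (Or.inl rfl) hx
  have hyM : y ∈ S.M := S.M1_le_M hy
  have hxyM : x * y ∈ S.M := S.M.mul_mem hx hyM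
  apply S.tail_eq hcar S.M₁ (Or.inl rfl) hxyM (Submonoid.mul_mem _ ht1 hy)
    (leR_mul_right y ht2)
  intro e he hexy
  set f := S.jn hcar e y with hf
  have hfM1 : f ∈ S.M₁ := S.parM_jn S.par1 hcar he hy
  have hfxy : leR S.M f (x * y) := S.jn_le hcar hexy (leR_mul_left hx)
  have hyf : leR S.M y f := S.jn_right hcar e y
  have hf' : f * y⁻¹ ∈ S.M₁ := S.parM_quot_of_leR S.par1 hcar hfM1 hyM hyf
  have hf'x : leR S.M (f * y⁻¹) x := by
    show x * (f * y⁻¹)⁻¹ ∈ S.M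
    have e1 : x * (f * y⁻¹)⁻¹ = (x * y) * f⁻¹ := by group
    rw [e1]; exact hfxy
  have hmax := ht3 _ hf' hf'x
  have hfle : leR S.M f (tail S.M S.M₁ x * y) := by
    have h2 := leR_mul_right y hmax
    have e2 : f * y⁻¹ * y = f := by group
    rwa [e2] at h2
  exact leR_trans (S.jn_left hcar e y) hfle

theorem Setting.tail_theta_pow (hcar : S.car = ⊤) (k : ℕ) :
    tail S.M S.M₁ (S.theta ^ k) = 1 := by
  have hθM : S.theta ^ k ∈ S.M := Submonoid.pow_mem _ S.theta_mem_M k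
  apply S.tail_eq hcar S.M₁ (Or.inl rfl) hθM (Submonoid.one_mem _)
    (leR_one_iff.2 hθM)
  intro c hc hcθ
  have hc1 : c = 1 := S.M1_coprime_theta hcar hc hcθ
  rw [hc1]
  exact leR_refl _ _

theorem Setting.tail_theta_pow_mul (hcar : S.car = ⊤) (k : ℕ) {c₀ : G}
    (hc₀ : c₀ ∈ S.M₁) : tail S.M S.M₁ (S.theta ^ k * c₀) = c₀ := by
  rw [S.tail_mul_M1 hcar (Submonoid.pow_mem _ S.theta_mem_M k) hc₀,
    S.tail_theta_pow hcar, one_mul]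

theorem Setting.tail_delta_pow (hcar : S.car = ⊤) (k : ℕ) :
    tail S.M S.M₁ (S.Δ ^ k) = S.δ1 ^ k := by
  rw [← S.theta_pow_mul_delta1_pow hcar k,
    S.tail_theta_pow_mul hcar k (Submonoid.pow_mem _ S.delta1_mem_M1 k)]

theorem Setting.G1_frac {w : G} (hw : w ∈ S.G₁) : ∃ n : ℕ, S.δ1 ^ n * w ∈ S.M₁ := by
  induction hw using Subgroup.closure_induction with
  | mem g hg => exact ⟨0, by rw [pow_zero, one_mul]; exact Submonoid.subset_closure hg⟩
  | one => exact ⟨0, by simpa using Submonoid.one_mem _⟩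
  | mul x y hx hy ihx ihy =>
      obtain ⟨nx, hnx⟩ := ihx
      obtain ⟨ny, hny⟩ := ihy
      refine ⟨nx + ny, ?_⟩
      have hcomm : S.δ1 ^ ny * x = x * S.δ1 ^ ny := S.delta1_pow_comm hx ny
      have e : S.δ1 ^ (nx + ny) * (x * y) = (S.δ1 ^ nx * x) * (S.δ1 ^ ny * y) := by
        rw [pow_add]
        calc S.δ1 ^ nx * S.δ1 ^ ny * (x * y)
            = S.δ1 ^ nx * (S.δ1 ^ ny * x) * y := by group
          _ = S.δ1 ^ nx * (x * S.δ1 ^ ny) * y := by rw [hcomm]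
          _ = (S.δ1 ^ nx * x) * (S.δ1 ^ ny * y) := by group
      rw [e]
      exact Submonoid.mul_mem _ hnx hny
  | inv x hx ihx =>
      obtain ⟨n, hn⟩ := ihx
      obtain ⟨m, W, hW, hpow⟩ := S.parM_leR_pow S.par1 hn
      refine ⟨m, ?_⟩
      have e : S.δ1 ^ m * x⁻¹ = W * (S.δ1 ^ n * x) * x⁻¹ * (S.δ1 ^ n)⁻¹ * S.δ1 ^ n := by
        rw [← hpow]
        group
      have e2 : W * (S.δ1 ^ n * x) * x⁻¹ * (S.δ1 ^ n)⁻¹ * S.δ1 ^ n = W * S.δ1 ^ n := by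
        group
      rw [e, e2]
      exact Submonoid.mul_mem _ hW (Submonoid.pow_mem _ S.delta1_mem_M1 n)

/-- the key coset lemma: if `θ^j w ∈ M` with `w ∈ G₁`, then `w ∈ M₁`. -/
theorem Setting.theta_coset (hcar : S.car = ⊤) {j : ℕ} {w : G} (hw : w ∈ S.G₁)
    (hz : S.theta ^ j * w ∈ S.M) : w ∈ S.M₁ := by
  obtain ⟨n, hv⟩ := S.G1_frac hw
  have hkey : (S.theta ^ j * w) * S.δ1 ^ n = S.theta ^ j * (S.δ1 ^ n * w) := by
    have hc := S.delta1_pow_comm hw n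
    rw [mul_assoc, ← hc]
  have ht1 : tail S.M S.M₁ ((S.theta ^ j * w) * S.δ1 ^ n)
      = tail S.M S.M₁ (S.theta ^ j * w) * S.δ1 ^ n :=
    S.tail_mul_M1 hcar hz (Submonoid.pow_mem _ S.delta1_mem_M1 n)
  have ht2 : tail S.M S.M₁ (S.theta ^ j * (S.δ1 ^ n * w)) = S.δ1 ^ n * w :=
    S.tail_theta_pow_mul hcar j hv
  have hmain : tail S.M S.M₁ (S.theta ^ j * w) * S.δ1 ^ n = S.δ1 ^ n * w := by
    rw [← ht1, hkey, ht2]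
  have hw' : w = (S.δ1 ^ n)⁻¹ * tail S.M S.M₁ (S.theta ^ j * w) * S.δ1 ^ n := by
    rw [show tail S.M S.M₁ (S.theta ^ j * w) = S.δ1 ^ n * w * (S.δ1 ^ n)⁻¹ by
      rw [← hmain]; group]
    group
  rw [hw']
  exact S.conj_pow_inv_parM S.par1 (S.tail_spec hcar S.M₁ (Or.inl rfl) hz).1 n

theorem Setting.theta_pow_mul_mem_M {m : ℕ} {c₀ : G} (hc₀ : c₀ ∈ S.M₁) :
    S.theta ^ m * c₀ ∈ S.M :=
  S.M.mul_mem (Submonoid.pow_mem _ S.theta_mem_M m) (S.M1_le_M hc₀)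

theorem Setting.theta_unmovable (hcar : S.car = ⊤) {m : ℕ} (hm : 1 ≤ m) {c₀ : G}
    (hc₀ : c₀ ∈ S.M₁) (hred : ¬ leR S.M S.δ1 c₀) :
    Unmovable S.M S.Δ (S.theta ^ m * c₀) := by
  refine ⟨S.theta_pow_mul_mem_M hc₀, fun hΔ => ?_⟩
  obtain ⟨m', rfl⟩ := Nat.exists_eq_add_of_le hm
  have hcg : c₀ * S.δ1⁻¹ ∈ S.G₁ :=
    Subgroup.mul_mem _ (S.M1_le_G1 hc₀) (Subgroup.inv_mem _ S.delta1_mem_G1)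
  have hc := S.theta_comm hcar hcg
  have e : S.theta ^ (1 + m') * c₀ * S.Δ⁻¹ = S.theta ^ m' * (c₀ * S.δ1⁻¹) := by
    calc S.theta ^ (1 + m') * c₀ * S.Δ⁻¹
        = S.theta ^ (1 + m') * (c₀ * S.δ1⁻¹) * S.theta⁻¹ := by
          rw [show S.Δ = S.theta * S.δ1 from (S.theta_mul_delta1).symm]
          group
      _ = S.theta ^ m' * (S.theta * (c₀ * S.δ1⁻¹)) * S.theta⁻¹ := by
          rw [add_comm 1 m', pow_succ]
          group
      _ = S.theta ^ m' * ((c₀ * S.δ1⁻¹) * S.theta) * S.theta⁻¹ := by rw [hc]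
      _ = S.theta ^ m' * (c₀ * S.δ1⁻¹) := by group
  have hz : S.theta ^ m' * (c₀ * S.δ1⁻¹) ∈ S.M := by
    rw [← e]
    exact hΔ
  have hmem := S.theta_coset hcar hcg hz
  exact hred (S.M1_le_M hmem)

theorem Setting.M1_unmovable (hcar : S.car = ⊤) {x : G} (hx : x ∈ S.M₁) :
    Unmovable S.M S.Δ x :=
  S.parM_unmovable S.par1 hcar S.M1_ne hx

theorem Setting.strip_align (hcar : S.car = ⊤) (k : ℕ) {c₀ : G} (hc₀ : c₀ ∈ S.M₁) :
    ∀ p, 1 ≤ p → strip S.M S.M₁ S.Nsub p (S.Δ ^ k)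
      = strip S.M S.M₁ S.Nsub p (S.theta ^ k * c₀) := by
  intro p hp
  induction p with
  | zero => omega
  | succ n ih =>
      by_cases hn : n = 0
      · subst hn
        rw [S.strip_one_eq, S.strip_one_eq, S.tail_delta_pow hcar,
          S.tail_theta_pow_mul hcar k hc₀]
        rw [← S.theta_pow_mul_delta1_pow hcar k]
        group
      · have hn1 : 1 ≤ n := by omega
        show strip S.M S.M₁ S.Nsub n (S.Δ ^ k) *
            (tail S.M (if n % 2 = 0 then S.M₁ else S.Nsub)
              (strip S.M S.M₁ S.Nsub n (S.Δ ^ k)))⁻¹ = _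
        rw [ih hn1]
        rfl

theorem Setting.dpt_theta_mul (hcar : S.car = ⊤) {k : ℕ} (hk : 1 ≤ k) {c₀ : G}
    (hc₀ : c₀ ∈ S.M₁) :
    dpt S.M S.M₁ S.Nsub (S.theta ^ k * c₀) = dpt S.M S.M₁ S.Nsub (S.Δ ^ k) := by
  have hsets : {p : ℕ | 1 ≤ p ∧ strip S.M S.M₁ S.Nsub p (S.theta ^ k * c₀) = 1}
      = {p : ℕ | 1 ≤ p ∧ strip S.M S.M₁ S.Nsub p (S.Δ ^ k) = 1} := by
    ext p
    simp only [Set.mem_setOf_eq]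
    constructor
    · rintro ⟨h1, h2⟩
      exact ⟨h1, by rw [S.strip_align hcar k hc₀ p h1]; exact h2⟩
    · rintro ⟨h1, h2⟩
      exact ⟨h1, by rw [← S.strip_align hcar k hc₀ p h1]; exact h2⟩
  show bh S.M S.M₁ S.Nsub (S.theta ^ k * c₀) / 2 = bh S.M S.M₁ S.Nsub (S.Δ ^ k) / 2
  have : bh S.M S.M₁ S.Nsub (S.theta ^ k * c₀) = bh S.M S.M₁ S.Nsub (S.Δ ^ k) := by
    show sInf _ = sInf _
    rw [hsets]
  rw [this]

end ThetaMachine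

end GarsideOrder
namespace GarsideOrder

section Forms
variable {G : Type*} [Group G] (S : Setting G)

theorem Setting.le_mu_pow {d : G} (hd : d ∈ S.M) (hne : d ≠ 1) (t : ℕ) :
    t ≤ S.mu (d ^ t) := by
  apply S.le_mu (Submonoid.pow_mem _ hd t)
  refine ⟨List.replicate t d, ?_, ?_, ?_⟩
  · intro x hx
    rw [List.eq_of_mem_replicate hx]
    exact ⟨hd, hne⟩
  · rw [List.prod_replicate]
  · rw [List.length_replicate]

/-- Δ-form existence -/
theorem Setting.delta_form {x : G} (hx : x ∈ S.M) :
    ∃ c : G, ∃ t : ℕ, Unmovable S.M S.Δ c ∧ x = c * S.Δ ^ t := by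
  classical
  set T := {t : ℕ | leR S.M (S.Δ ^ t) x} with hT
  have h0 : (0 : ℕ) ∈ T := by
    show leR S.M (S.Δ ^ 0) x
    simpa [leR] using hx
  have hbdd : BddAbove T := by
    refine ⟨S.mu x, fun t ht => ?_⟩
    have h1 : t ≤ S.mu (S.Δ ^ t) := S.le_mu_pow S.garside.delta_mem S.delta_ne_one t
    have h2 : S.mu (S.Δ ^ t) ≤ S.mu x :=
      S.mu_le_of_leR hx (Submonoid.pow_mem _ S.garside.delta_mem t) ht
    omega
  set t := sSup T with ht
  have htT : t ∈ T := Nat.sSup_mem ⟨0, h0⟩ hbdd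
  refine ⟨x * (S.Δ ^ t)⁻¹, t, ⟨htT, ?_⟩, by group⟩
  intro hdiv
  have hsucc : t + 1 ∈ T := by
    show leR S.M (S.Δ ^ (t + 1)) x
    show x * (S.Δ ^ (t + 1))⁻¹ ∈ S.M
    have e : x * (S.Δ ^ (t + 1))⁻¹ = x * (S.Δ ^ t)⁻¹ * S.Δ⁻¹ := by
      rw [pow_succ]; group
    rw [e]
    exact hdiv
  have := le_csSup hbdd hsucc
  omega

/-- δ₁-form of an element of `M₁` -/
theorem Setting.delta1_form (hcar : S.car = ⊤) {x : G} (hx : x ∈ S.M₁) :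
    ∃ c : G, ∃ s : ℕ, c ∈ S.M₁ ∧ ¬ leR S.M S.δ1 c ∧ x = c * S.δ1 ^ s := by
  classical
  have hxM : x ∈ S.M := S.M1_le_M hx
  set T := {s : ℕ | leR S.M (S.δ1 ^ s) x} with hT
  have h0 : (0 : ℕ) ∈ T := by
    show leR S.M (S.δ1 ^ 0) x
    simpa [leR] using hxM
  have hbdd : BddAbove T := by
    refine ⟨S.mu x, fun s hs => ?_⟩
    have h1 : s ≤ S.mu (S.δ1 ^ s) := S.le_mu_pow S.par1.mem S.delta1_ne_one s
    have h2 : S.mu (S.δ1 ^ s) ≤ S.mu x :=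
      S.mu_le_of_leR hxM (Submonoid.pow_mem _ S.par1.mem s) hs
    omega
  set s := sSup T with hs
  have hsT : s ∈ T := Nat.sSup_mem ⟨0, h0⟩ hbdd
  have hquot : x * (S.δ1 ^ s)⁻¹ ∈ S.M₁ :=
    S.parM_quot_of_leR S.par1 hcar hx (Submonoid.pow_mem _ S.par1.mem s) hsT
  refine ⟨x * (S.δ1 ^ s)⁻¹, s, hquot, ?_, by group⟩
  intro hdiv
  have hsucc : s + 1 ∈ T := by
    show leR S.M (S.δ1 ^ (s + 1)) x
    show x * (S.δ1 ^ (s + 1))⁻¹ ∈ S.M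
    have e : x * (S.δ1 ^ (s + 1))⁻¹ = x * (S.δ1 ^ s)⁻¹ * S.δ1⁻¹ := by
      rw [pow_succ]; group
    rw [e]
    exact hdiv
  have := le_csSup hbdd hsucc
  omega

theorem Setting.prod_form (hcar : S.car = ⊤) (a b : G) (k l : ℕ) :
    (a * (S.Δ ^ k)⁻¹) * (b * (S.Δ ^ l)⁻¹) = (a * b) * (S.Δ ^ (k + l))⁻¹ := by
  have hc : Commute (S.Δ ^ k) b := S.delta_pow_comm hcar k b
  have h2 := hc.inv_left.eq
  calc (a * (S.Δ ^ k)⁻¹) * (b * (S.Δ ^ l)⁻¹)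
      = a * ((S.Δ ^ k)⁻¹ * b) * (S.Δ ^ l)⁻¹ := by group
    _ = a * (b * (S.Δ ^ k)⁻¹) * (S.Δ ^ l)⁻¹ := by rw [h2]
    _ = (a * b) * (S.Δ ^ (k + l))⁻¹ := by rw [pow_add]; group

theorem Setting.thetaBar_decomp {x : G} (hx : x ∈ thetaBar S.M₁ S.theta) :
    ∃ p : ℕ, ∃ a₀, a₀ ∈ S.M₁ ∧ x = S.theta ^ p * a₀ ∧ (1 ≤ p ∨ x ∈ S.M₁) := by
  rcases hx with hx | hx
  · obtain ⟨p, hp, a₀, ha₀, hxe⟩ := hx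
    exact ⟨p, a₀, ha₀, hxe, Or.inl hp⟩
  · exact ⟨0, x, hx, by simp, Or.inr hx⟩

theorem Setting.theta_p_lt (hcar : S.car = ⊤) {ζ : ℕ} (hζ : 1 ≤ ζ)
    (hA : S.condA ζ) {p k : ℕ} (hk : 1 ≤ k) {a₀ : G} (ha₀ : a₀ ∈ S.M₁)
    (hdpt : dpt S.M S.M₁ S.Nsub (S.theta ^ p * a₀) < dpt S.M S.M₁ S.Nsub (S.Δ ^ k)) :
    p < k := by
  rcases Nat.eq_zero_or_pos p with hp | hp
  · omega
  · have h1 : dpt S.M S.M₁ S.Nsub (S.theta ^ p * a₀) = dpt S.M S.M₁ S.Nsub (S.Δ ^ p) :=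
      S.dpt_theta_mul hcar hp ha₀
    have h2 := hA p hp
    have h3 := hA k hk
    rw [h1, h2, h3] at hdpt
    have : ζ * p < ζ * k := by omega
    exact Nat.lt_of_mul_lt_mul_left this

end Forms

end GarsideOrder
namespace GarsideOrder

section Builder
variable {G : Type*} [Group G] (S : Setting G)

theorem Setting.neg_builder (hcar : S.car = ⊤) {ζ : ℕ} (hA : S.condA ζ)
    {α β a b : G} {k l : ℕ}
    (hαe : α = a * (S.Δ ^ k)⁻¹) (hβe : β = b * (S.Δ ^ l)⁻¹)
    {c : G} {t : ℕ} (huc : Unmovable S.M S.Δ c) (habc : a * b = c * S.Δ ^ t)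
    (htlt : t < k + l) (hdpt : dpt S.M S.M₁ S.Nsub c ≤ ζ * (k + l - t)) :
    α * β ∈ S.Neg := by
  refine ⟨c, k + l - t, huc, by omega, ?_, ?_⟩
  · rw [hαe, hβe, S.prod_form hcar a b k l, habc]
    have hp : S.Δ ^ (k + l) = S.Δ ^ t * S.Δ ^ (k + l - t) := by
      rw [← pow_add]
      congr 1
      omega
    rw [mul_assoc, hp]
    group
  · rw [hA (k + l - t) (by omega)]
    omega

end Builder

end GarsideOrder

open GarsideOrder in
/-- Assuming Conditions A and B with constant `ζ ≥ 1`, the product of two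
`(H, G₁)`-negative elements is `(H, G₁)`-negative. -/
theorem statement5 {G : Type*} [Group G] (S : Setting G) (hcar : S.car = ⊤)
    (ζ : ℕ) (hζ : 1 ≤ ζ) (hA : S.condA ζ) (hB : S.condB ζ) :
    ∀ α ∈ S.Neg, ∀ β ∈ S.Neg, α * β ∈ S.Neg := by
  intro α hα β hβ
  obtain ⟨a, k, hua, hk, hαe, hdpa⟩ := hα
  obtain ⟨b, l, hub, hl, hβe, hdpb⟩ := hβ
  have haM : a ∈ S.M := hua.1
  have hbM : b ∈ S.M := hub.1
  by_cases hab : a ∈ thetaBar S.M₁ S.theta ∧ b ∈ thetaBar S.M₁ S.theta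
  · -- Case 2 : both numerators are theta elements
    obtain ⟨p, a₀, ha₀, hae, -⟩ := S.thetaBar_decomp hab.1
    obtain ⟨q, b₀, hb₀, hbe, -⟩ := S.thetaBar_decomp hab.2
    have hpk : p < k := by
      rcases Nat.eq_zero_or_pos p with hp | hp
      · omega
      · exact S.theta_p_lt hcar hζ hA hk ha₀ (hae ▸ hdpa)
    have hql : q < l := by
      rcases Nat.eq_zero_or_pos q with hq | hq
      · omega
      · exact S.theta_p_lt hcar hζ hA hl hb₀ (hbe ▸ hdpb)
    have hab2 : a * b = S.theta ^ (p + q) * (a₀ * b₀) := by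
      rw [hae, hbe]
      have hc : S.theta ^ q * a₀ = a₀ * S.theta ^ q :=
        S.theta_pow_comm hcar (S.M1_le_G1 ha₀) q
      calc S.theta ^ p * a₀ * (S.theta ^ q * b₀)
          = S.theta ^ p * (a₀ * S.theta ^ q) * b₀ := by group
        _ = S.theta ^ p * (S.theta ^ q * a₀) * b₀ := by rw [hc]
        _ = S.theta ^ (p + q) * (a₀ * b₀) := by rw [pow_add]; group
    obtain ⟨c₀, s, hc₀, hred, hfe⟩ := S.delta1_form hcar (Submonoid.mul_mem _ ha₀ hb₀)
    by_cases hs : s ≤ p + q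
    · -- a*b = (θ^(p+q-s) c₀) Δ^s
      have habc : a * b = (S.theta ^ (p + q - s) * c₀) * S.Δ ^ s := by
        rw [hab2, hfe]
        have h1 : S.theta ^ (p + q) = S.theta ^ (p + q - s) * S.theta ^ s := by
          rw [← pow_add]
          congr 1
          omega
        have h2 : S.theta ^ s * c₀ = c₀ * S.theta ^ s :=
          S.theta_pow_comm hcar (S.M1_le_G1 hc₀) s
        calc S.theta ^ (p + q) * (c₀ * S.δ1 ^ s)
            = S.theta ^ (p + q - s) * (S.theta ^ s * c₀) * S.δ1 ^ s := by rw [h1]; group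
          _ = S.theta ^ (p + q - s) * (c₀ * S.theta ^ s) * S.δ1 ^ s := by rw [h2]
          _ = S.theta ^ (p + q - s) * c₀ * (S.theta ^ s * S.δ1 ^ s) := by group
          _ = (S.theta ^ (p + q - s) * c₀) * S.Δ ^ s := by
              rw [S.theta_pow_mul_delta1_pow hcar s]
      rcases Nat.eq_zero_or_pos (p + q - s) with hm | hm
      · -- c = c₀ ∈ M₁
        have habc' : a * b = c₀ * S.Δ ^ s := by
          rw [habc, hm]
          simp
        refine S.neg_builder hcar hA hαe hβe (S.M1_unmovable hcar hc₀) habc'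
          (by omega) ?_
        rw [S.dpt_of_mem_M1 hcar hc₀]
        omega
      · refine S.neg_builder hcar hA hαe hβe
          (S.theta_unmovable hcar hm hc₀ hred) habc (by omega) ?_
        rw [S.dpt_theta_mul hcar hm hc₀, hA (p + q - s) hm]
        have hmk : (p + q - s) + 1 ≤ k + l - s := by omega
        have h5 : ζ * ((p + q - s) + 1) ≤ ζ * (k + l - s) :=
          Nat.mul_le_mul_left ζ hmk
        have h6 : ζ * ((p + q - s) + 1) = ζ * (p + q - s) + ζ := by ring
        linarith
    · -- s > p + q :  a*b = (c₀ δ1^(s-(p+q))) Δ^(p+q)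
      have habc : a * b = (c₀ * S.δ1 ^ (s - (p + q))) * S.Δ ^ (p + q) := by
        rw [hab2, hfe]
        have h1 : S.δ1 ^ s = S.δ1 ^ (s - (p + q)) * S.δ1 ^ (p + q) := by
          rw [← pow_add]
          congr 1
          omega
        have h2 : S.theta ^ (p + q) * (c₀ * S.δ1 ^ (s - (p + q)))
            = (c₀ * S.δ1 ^ (s - (p + q))) * S.theta ^ (p + q) :=
          S.theta_pow_comm hcar
            (Subgroup.mul_mem _ (S.M1_le_G1 hc₀)
              (Subgroup.pow_mem _ S.delta1_mem_G1 _)) (p + q)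
        rw [h1]
        calc S.theta ^ (p + q) * (c₀ * (S.δ1 ^ (s - (p + q)) * S.δ1 ^ (p + q)))
            = S.theta ^ (p + q) * (c₀ * S.δ1 ^ (s - (p + q))) * S.δ1 ^ (p + q) := by
              group
          _ = (c₀ * S.δ1 ^ (s - (p + q))) * (S.theta ^ (p + q) * S.δ1 ^ (p + q)) := by
              rw [h2]; group
          _ = (c₀ * S.δ1 ^ (s - (p + q))) * S.Δ ^ (p + q) := by
              rw [S.theta_pow_mul_delta1_pow hcar (p + q)]
      have hcM1 : c₀ * S.δ1 ^ (s - (p + q)) ∈ S.M₁ :=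
        Submonoid.mul_mem _ hc₀ (Submonoid.pow_mem _ S.delta1_mem_M1 _)
      refine S.neg_builder hcar hA hαe hβe (S.M1_unmovable hcar hcM1) habc
        (by omega) ?_
      rw [S.dpt_of_mem_M1 hcar hcM1]
      omega
  · -- Case 1 : Condition B applies
    obtain ⟨c, t, huc, habc⟩ := S.delta_form (S.M.mul_mem haM hbM)
    obtain ⟨ε, hε, heq, hclause⟩ := hB a b c (t : ℤ) hua hub hab huc
      (by rw [habc, zpow_natCast])
    have hda : dpt S.M S.M₁ S.Nsub a ≤ ζ * k := by
      have := hA k hk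
      omega
    have hdb : dpt S.M S.M₁ S.Nsub b ≤ ζ * l := by
      have := hA l hl
      omega
    have hmulkl : ζ * (k + l) = ζ * k + ζ * l := by ring
    have htle : t ≤ k + l := by
      by_contra hcon
      push_neg at hcon
      have h1 : ζ * (k + l + 1) ≤ ζ * t := Nat.mul_le_mul_left ζ (by omega)
      have h2 : ζ * (k + l + 1) = ζ * (k + l) + ζ := by ring
      have h3 : (0 : ℤ) ≤ (dpt S.M S.M₁ S.Nsub c : ℤ) := Int.natCast_nonneg _
      have hda' : ((dpt S.M S.M₁ S.Nsub a : ℕ) : ℤ) ≤ ((ζ * k : ℕ) : ℤ) := by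
        exact_mod_cast hda
      have hdb' : ((dpt S.M S.M₁ S.Nsub b : ℕ) : ℤ) ≤ ((ζ * l : ℕ) : ℤ) := by
        exact_mod_cast hdb
      have h1' : ((ζ * (k + l) + ζ : ℕ) : ℤ) ≤ ((ζ * t : ℕ) : ℤ) := by
        exact_mod_cast h2 ▸ h1
      have hζ' : (1 : ℤ) ≤ (ζ : ℤ) := by exact_mod_cast hζ
      push_cast at hda' hdb' h1' heq ⊢
      linarith
    rcases eq_or_lt_of_le htle with hteq | htlt
    · -- t = k + l : contradiction via the ε-clause
      exfalso
      subst hteq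
      have h3 : (0 : ℤ) ≤ (dpt S.M S.M₁ S.Nsub c : ℤ) := Int.natCast_nonneg _
      have hda' : ((dpt S.M S.M₁ S.Nsub a : ℕ) : ℤ) ≤ ((ζ * k : ℕ) : ℤ) := by
        exact_mod_cast hda
      have hdb' : ((dpt S.M S.M₁ S.Nsub b : ℕ) : ℤ) ≤ ((ζ * l : ℕ) : ℤ) := by
        exact_mod_cast hdb
      have hmul' : ((ζ * (k + l) : ℕ) : ℤ) = ((ζ * k : ℕ) : ℤ) + ((ζ * l : ℕ) : ℤ) := by
        exact_mod_cast hmulkl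
      push_cast at hda' hdb' hmul' heq
      have hε0 : (ε : ℤ) = 0 := by linarith [Int.natCast_nonneg ε]
      have hdc : (dpt S.M S.M₁ S.Nsub c : ℤ) = 0 := by linarith
      have hcM1 : c ∈ S.M₁ :=
        S.mem_M1_of_dpt_eq_zero hcar huc.1 (by exact_mod_cast hdc)
      have := hclause (Or.inr (Or.inr hcM1))
      rw [this] at hε0
      norm_num at hε0
    · -- t < k + l
      refine S.neg_builder hcar hA hαe hβe huc habc htlt ?_
      have h4 : t + (k + l - t) = k + l := by omega
      have h5 : ζ * t + ζ * (k + l - t) = ζ * (k + l) := by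
        rw [← Nat.mul_add, h4]
      have hda' : ((dpt S.M S.M₁ S.Nsub a : ℕ) : ℤ) ≤ ((ζ * k : ℕ) : ℤ) := by
        exact_mod_cast hda
      have hdb' : ((dpt S.M S.M₁ S.Nsub b : ℕ) : ℤ) ≤ ((ζ * l : ℕ) : ℤ) := by
        exact_mod_cast hdb
      have h5' : ((ζ * t : ℕ) : ℤ) + ((ζ * (k + l - t) : ℕ) : ℤ)
          = ((ζ * k : ℕ) : ℤ) + ((ζ * l : ℕ) : ℤ) := by
        exact_mod_cast h5.trans hmulkl
      have hgoal : ((dpt S.M S.M₁ S.Nsub c : ℕ) : ℤ) ≤ ((ζ * (k + l - t) : ℕ) : ℤ) := by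
        push_cast at heq h5' hda' hdb' ⊢
        linarith [Int.natCast_nonneg ε]
      exact_mod_cast hgoal
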